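/- arXiv:1909.13372 — 7 statements merged into one kernel-verified Lean document; each statement's English description precedes it below -/
import Mathlib

section
/- (Robinson's test, first equivalence) A first-order theory T is model complete if and only if every model of T is existentially closed for T. -/
open FirstOrder FirstOrder.Language FirstOrder.Language.Structure

universe u v

variable {L : FirstOrder.Language.{u, v}}

/-- A formula is *universal* if it has the form `∀ ȳ, χ` with `χ` quantifier-free. -/
def IsUniversalFormula {α : Type*} (φ : L.Formula α) : Prop :=
  ∃ (n : ℕ) (χ : L.BoundedFormula α n), χ.IsQF ∧ φ = χ.alls

/-- A formula is *existential* if it has the form `∃ ȳ, χ` with `χ` quantifier-free. -/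
def IsExistentialFormula {α : Type*} (φ : L.Formula α) : Prop :=
  ∃ (n : ℕ) (χ : L.BoundedFormula α n), χ.IsQF ∧ φ = χ.exs

/-- A theory is *model complete* if every embedding between models of it is elementary. -/
def IsModelComplete (T : L.Theory) : Prop :=
  ∀ (M N : Type (max u v)) [L.Structure M] [L.Structure N] [Nonempty M] [Nonempty N],
    M ⊨ T → N ⊨ T → ∀ (f : M ↪[L] N) (n : ℕ) (φ : L.Formula (Fin n)) (x : Fin n → M),
      φ.Realize (f ∘ x) ↔ φ.Realize x

/-- `M` is *existentially closed in `N` via* the embedding `f` if every existential formula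
with parameters from `M` that holds in `N` (of the images) already holds in `M`. -/
def IsECVia {M N : Type (max u v)} [L.Structure M] [L.Structure N] (f : M ↪[L] N) : Prop :=
  ∀ (k : ℕ) (φ : L.Formula (Fin k)), IsExistentialFormula φ →
    ∀ x : Fin k → M, φ.Realize (f ∘ x) → φ.Realize x

/-- `M` is *existentially closed for* the theory `T` if `M ⊨ T` and `M` is existentially
closed in every model of `T` via every embedding. -/
def IsECFor (T : L.Theory) (M : Type (max u v)) [L.Structure M] [Nonempty M] : Prop :=
  M ⊨ T ∧ ∀ (N : Type (max u v)) [L.Structure N] [Nonempty N], N ⊨ T →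
    ∀ f : M ↪[L] N, IsECVia f

/-- `T_∀` : the set of universal sentences that are logical consequences of `T`. -/
def universalPart (T : L.Theory) : L.Theory :=
  {φ : L.Sentence | IsUniversalFormula φ ∧ T ⊨ᵇ φ}

/-- `Tstar` is a *model companion* of `T`: `Tstar` is model complete, every model of `T`
embeds into a model of `Tstar`, and every model of `Tstar` embeds into a model of `T`. -/
def IsModelCompanion (T Tstar : L.Theory) : Prop :=
  IsModelComplete Tstar ∧
  (∀ (M : Type (max u v)) [L.Structure M] [Nonempty M], M ⊨ T →
     ∃ (N : Type (max u v)) (_ : L.Structure N) (_ : Nonempty N),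
       N ⊨ Tstar ∧ Nonempty (M ↪[L] N)) ∧
  (∀ (M : Type (max u v)) [L.Structure M] [Nonempty M], M ⊨ Tstar →
     ∃ (N : Type (max u v)) (_ : L.Structure N) (_ : Nonempty N),
       N ⊨ T ∧ Nonempty (M ↪[L] N))

theorem isQF_mapTermRel {L' : FirstOrder.Language} {α β : Type*}
    {ft : ∀ n, L.Term (α ⊕ Fin n) → L'.Term (β ⊕ Fin n)}
    {fr : ∀ n, L.Relations n → L'.Relations n}
    {h : ∀ n, L'.BoundedFormula β (n+1) → L'.BoundedFormula β (n+1)}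
    {n} {φ : L.BoundedFormula α n} (hφ : φ.IsQF) :
    (φ.mapTermRel ft fr h).IsQF := by
  induction hφ with
  | falsum => exact BoundedFormula.IsQF.falsum
  | of_isAtomic ha =>
    cases ha with
    | equal t₁ t₂ => exact (BoundedFormula.IsAtomic.equal _ _).isQF
    | rel R ts => exact (BoundedFormula.IsAtomic.rel _ _).isQF
  | imp _ _ ih1 ih2 => exact ih1.imp ih2

theorem isQF_equivSentence_symm {γ : Type*} {ψ : L[[γ]].Sentence} (h : ψ.IsQF) :
    (Formula.equivSentence.symm ψ).IsQF := by
  simp only [Formula.equivSentence, Equiv.symm_symm, Equiv.trans_apply]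
  exact isQF_mapTermRel (isQF_mapTermRel h)

theorem isQF_restrictFreeVar {α β : Type*} [DecidableEq α] :
    ∀ {n} {φ : L.BoundedFormula α n}, φ.IsQF →
      ∀ (g : φ.freeVarFinset → β), (φ.restrictFreeVar g).IsQF := by
  intro n φ hφ
  induction hφ with
  | falsum => intro g; exact BoundedFormula.IsQF.falsum
  | of_isAtomic ha =>
    cases ha with
    | equal t₁ t₂ => intro g; exact (BoundedFormula.IsAtomic.equal _ _).isQF
    | rel R ts => intro g; exact (BoundedFormula.IsAtomic.rel _ _).isQF
  | imp _ _ ih1 ih2 => intro g; exact (ih1 _).imp (ih2 _)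

def conjList : List (L.Sentence) → L.Sentence
  | [] => ⊤
  | ψ :: l => ψ ⊓ conjList l

theorem conjList_isQF : ∀ {l : List (L.Sentence)}, (∀ ψ ∈ l, ψ.IsQF) → (conjList l).IsQF
  | [], _ => BoundedFormula.isQF_bot.not
  | ψ :: l, h => (h ψ (List.mem_cons_self)).inf
      (conjList_isQF fun χ hχ => h χ (List.mem_cons_of_mem _ hχ))

theorem realize_conjList {K : Type*} [L.Structure K] :
    ∀ {l : List (L.Sentence)}, K ⊨ conjList l ↔ ∀ ψ ∈ l, K ⊨ ψ
  | [] => by simp [conjList, Sentence.Realize]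
  | ψ :: l => by
    have : K ⊨ (ψ ⊓ conjList l) ↔ (K ⊨ ψ ∧ K ⊨ conjList l) := by
      simp only [Sentence.Realize, Formula.Realize, BoundedFormula.realize_inf]
    rw [conjList, this, realize_conjList (l := l)]
    constructor
    · rintro ⟨h1, h2⟩ χ hχ
      rcases List.mem_cons.1 hχ with rfl | hχ
      exacts [h1, h2 χ hχ]
    · intro h; exact ⟨h ψ (List.mem_cons_self), fun χ hχ => h χ (List.mem_cons_of_mem _ hχ)⟩

theorem diagram_isSatisfiable {M N : Type (max u v)} [L.Structure M] [L.Structure N]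
    [Nonempty M] [Nonempty N] {f : M ↪[L] N} (hec : IsECVia f) :
    ((((fun φ : L.Formula M => Formula.equivSentence (φ.relabel f)) ''
        {φ | φ.Realize (id : M → M)}) ∪
      {ψ | BoundedFormula.IsQF ψ ∧ N ⊨ ψ}) : L[[N]].Theory).IsSatisfiable := by
  classical
  rw [Theory.isSatisfiable_iff_isFinitelySatisfiable]
  intro T₀ hT₀
  set qd : L[[N]].Theory := {ψ | BoundedFormula.IsQF ψ ∧ N ⊨ ψ} with hqd
  set l : List (L[[N]].Sentence) := T₀.toList.filter (fun ψ => ψ ∈ qd) with hl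
  have hlq : ∀ ψ ∈ l, ψ ∈ qd := fun ψ hψ => by
    have := List.mem_filter.1 hψ
    exact of_decide_eq_true this.2
  set ψ₀ : L[[N]].Sentence := conjList l with hψ₀
  have hψ₀qf : ψ₀.IsQF := conjList_isQF fun ψ hψ => (hlq ψ hψ).1
  have hψ₀N : N ⊨ ψ₀ := realize_conjList.2 fun ψ hψ => (hlq ψ hψ).2
  set χ : L.Formula N := Formula.equivSentence.symm ψ₀ with hχ
  have hχqf : χ.IsQF := isQF_equivSentence_symm hψ₀qf
  set s : Set N := ↑χ.freeVarFinset with hs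
  have hss : ↑χ.freeVarFinset ⊆ s := subset_refl _
  set χ₀ := χ.restrictFreeVar (Set.inclusion hss) with hχ₀
  have hχ₀qf : χ₀.IsQF := isQF_restrictFreeVar hχqf _
  haveI : Fintype ↥s := FinsetCoe.fintype _
  set A := {v : ↥s // (v : N) ∈ Set.range f} with hA
  set B := {v : ↥s // (v : N) ∉ Set.range f} with hB
  set e : A ≃ Fin (Fintype.card A) := Fintype.equivFin A with he
  set r : ↥s → Fin (Fintype.card A) ⊕ B := fun v =>
    if h : (v : N) ∈ Set.range f then Sum.inl (e ⟨v, h⟩) else Sum.inr ⟨v, h⟩ with hr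
  set φ' : L.Formula (Fin (Fintype.card A)) := Formula.iExs B (Formula.relabel r χ₀) with hφ'
  have hφ'ex : IsExistentialFormula φ' :=
    ⟨_, _, (hχ₀qf.relabel (Sum.inl ∘ r)).relabel (fun a => Sum.map id
      (⇑(Classical.choice (Classical.choose_spec (Finite.exists_equiv_fin B)))) a), rfl⟩
  set x : Fin (Fintype.card A) → M := fun i => ((e.symm i).2).choose with hxdef
  have hx : ∀ i, f (x i) = ((e.symm i : A) : ↥s) := fun i => ((e.symm i).2).choose_spec
  have hNreal : φ'.Realize (f ∘ x) := by
    rw [Formula.realize_iExs]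
    refine ⟨fun v : B => ((v : ↥s) : N), ?_⟩
    rw [Formula.realize_relabel]
    show Formula.Realize χ₀ (fun a : ↥s => Sum.elim (f ∘ x) (fun v : B => ((v : ↥s) : N)) (r a))
    have heq : (fun a : ↥s => Sum.elim (f ∘ x) (fun v : B => ((v : ↥s) : N)) (r a)) =
        ((fun n : N => n) ∘ (fun a : ↥s => (a : N))) := by
      funext a
      by_cases h : (a : N) ∈ Set.range f
      · simp only [hr, dif_pos h, Sum.elim_inl, Function.comp_apply]
        have := hx (e ⟨a, h⟩)
        rw [Equiv.symm_apply_apply] at this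
        exact this
      · simp only [hr, dif_neg h, Sum.elim_inr, Function.comp_apply]
    rw [heq]
    have := (BoundedFormula.realize_restrictFreeVar' (M := N) hss
      (v := fun n : N => n) (xs := default)).2 ?_
    · exact this
    · show χ.Realize (fun n : N => n)
      have : (fun n : N => n) = (fun n : N => ((L.con n) : N)) := rfl
      rw [this, Formula.realize_equivSentence_symm_con]
      exact hψ₀N
  obtain ⟨w, hw⟩ := Formula.realize_iExs.1 (hec _ φ' hφ'ex x hNreal)
  rw [Formula.realize_relabel] at hw
  set c : N → M := fun n =>
    if h : n ∈ Set.range f then h.choose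
    else if hns : n ∈ s then w ⟨⟨n, hns⟩, h⟩
    else Classical.arbitrary M with hc
  have hcf : ∀ m : M, c (f m) = m := by
    intro m
    have hmem : f m ∈ Set.range f := ⟨m, rfl⟩
    have : c (f m) = hmem.choose := by simp only [hc, dif_pos hmem]
    rw [this]
    exact f.injective hmem.choose_spec
  letI : (constantsOn N).Structure M := constantsOn.structure c
  have hconM : (fun n : N => ((L.con n) : M)) = c := rfl
  have hcc : c ∘ (fun a : ↥s => (a : N)) = (fun a : ↥s => Sum.elim x w (r a)) := by
    funext a
    by_cases h : (a : N) ∈ Set.range f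
    · simp only [Function.comp_apply, hc, dif_pos h, hr, Sum.elim_inl]
      have := hx (e ⟨a, h⟩)
      rw [Equiv.symm_apply_apply] at this
      exact f.injective (by rw [h.choose_spec, this])
    · simp only [Function.comp_apply, hc, dif_neg h, dif_pos a.2, hr, Sum.elim_inr]
  have hMψ₀ : M ⊨ ψ₀ := by
    rw [← Formula.realize_equivSentence_symm_con M ψ₀, ← hχ, hconM]
    have h2 : Formula.Realize χ₀ (c ∘ fun a : ↥s => (a : N)) := by rw [hcc]; exact hw
    exact (BoundedFormula.realize_restrictFreeVar' (M := M) hss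
      (v := c) (xs := default)).1 h2
  haveI : M ⊨ (↑T₀ : L[[N]].Theory) := by
    rw [Theory.model_iff]
    intro ψ hψ
    rcases hT₀ hψ with hψe | hψq
    · obtain ⟨φ, hφ, rfl⟩ := hψe
      rw [Formula.realize_equivSentence, hconM, Formula.realize_relabel]
      have : c ∘ ⇑f = id := by funext m; exact hcf m
      rw [this]
      exact hφ
    · have hmem : ψ ∈ l := by
        rw [hl, List.mem_filter]
        exact ⟨Finset.mem_toList.2 hψ, decide_eq_true hψq⟩
      exact realize_conjList.1 hMψ₀ ψ hmem
  exact ⟨Theory.ModelType.of _ M⟩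

theorem exists_amalgam {M N : Type (max u v)} [L.Structure M] [L.Structure N]
    [Nonempty M] [Nonempty N] {f : M ↪[L] N} (hec : IsECVia f) :
    ∃ (P : Type (max u v)) (_ : L.Structure P) (_ : Nonempty P)
      (h : M ↪ₑ[L] P) (g : N ↪[L] P), ∀ m, g (f m) = h m := by
  classical
  obtain ⟨K⟩ := diagram_isSatisfiable hec
  letI : L.Structure K := (L.lhomWithConstants N).reduct K
  haveI : (L.lhomWithConstants N).IsExpansionOn (K : Type (max u v)) :=
    LHom.isExpansionOn_reduct _ _
  have hed : ∀ (φ : L.Formula M), φ.Realize (id : M → M) →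
      Formula.Realize (φ.relabel ⇑f) (fun n : N => ((L.con n) : K)) := by
    intro φ hφ
    have hmem : Formula.equivSentence (φ.relabel ⇑f) ∈
        ((((fun φ : L.Formula M => Formula.equivSentence (φ.relabel f)) ''
          {φ | φ.Realize (id : M → M)}) ∪
          {ψ | BoundedFormula.IsQF ψ ∧ N ⊨ ψ}) : L[[N]].Theory) := Or.inl ⟨φ, hφ, rfl⟩
    have := Theory.realize_sentence_of_mem (M := K) _ hmem
    rwa [Formula.realize_equivSentence] at this
  have hqd : ∀ ψ : L[[N]].Sentence, ψ.IsQF → N ⊨ ψ → (K : Type (max u v)) ⊨ ψ := by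
    intro ψ h1 h2
    exact Theory.realize_sentence_of_mem (M := K)
      ((((fun φ : L.Formula M => Formula.equivSentence (φ.relabel f)) ''
        {φ | φ.Realize (id : M → M)}) ∪
        {ψ | BoundedFormula.IsQF ψ ∧ N ⊨ ψ}) : L[[N]].Theory) (Or.inr ⟨h1, h2⟩)
  have key : ∀ (k : ℕ) (χ : L.Formula (Fin k)) (xv : Fin k → M), χ.Realize xv →
      χ.Realize (fun i => ((L.con (f (xv i))) : K)) := by
    intro k χ xv hχr
    have h1 : (χ.relabel xv).Realize (id : M → M) := by
      rw [Formula.realize_relabel]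
      simpa using hχr
    have h2 := hed (χ.relabel xv) h1
    rw [Formula.realize_relabel, Formula.realize_relabel] at h2
    exact h2
  refine ⟨K, inferInstance, inferInstance,
    ⟨fun m => ((L.con (f m)) : K), ?_⟩,
    ⟨⟨fun n => ((L.con n) : K), ?_⟩, ?_, ?_⟩, fun m => rfl⟩
  · -- elementarity
    intro n φ xv
    constructor
    · intro hP
      by_contra hMx
      have := key n φ.not xv (by rwa [Formula.realize_not])
      rw [Formula.realize_not] at this
      exact this hP
    · intro hMx
      exact key n φ xv hMx
  · -- injectivity
    intro a b hab
    by_contra hne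
    have hsent : N ⊨ ((Term.equal ((L.con a).term) ((L.con b).term)).not :
        L[[N]].Formula Empty) := by
      simp only [Sentence.Realize, Formula.realize_not, Formula.realize_equal,
        Term.realize_constants]
      exact fun h => hne h
    have hK := hqd ((Term.equal ((L.con a).term) ((L.con b).term)).not)
      ((BoundedFormula.IsAtomic.equal _ _).isQF.not) hsent
    simp only [Sentence.Realize, Formula.realize_not, Formula.realize_equal,
      Term.realize_constants] at hK
    exact hK hab
  · -- map_fun
    intro k F xv
    have hsent : N ⊨ (Term.equal ((L.con (funMap F xv)).term)
        (Term.func ((L.lhomWithConstants N).onFunction F) (fun i => (L.con (xv i)).term)) : L[[N]].Formula Empty) := by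
      simp only [Sentence.Realize, Formula.realize_equal, Term.realize_constants,
        Term.realize_func]
      rfl
    have hK := hqd (Term.equal ((L.con (funMap F xv)).term)
        (Term.func ((L.lhomWithConstants N).onFunction F) (fun i => (L.con (xv i)).term)))
      ((BoundedFormula.IsAtomic.equal _ _).isQF) hsent
    simp only [Sentence.Realize, Formula.realize_equal, Term.realize_constants,
      Term.realize_func, LHom.map_onFunction] at hK
    exact hK
  · -- map_rel
    intro k R xv
    constructor
    · intro hK0
      by_contra hn
      have hsent : N ⊨ ((Relations.formula (L := L[[N]]) ((L.lhomWithConstants N).onRelation R)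
          (fun i => (L.con (xv i)).term)).not : L[[N]].Formula Empty) := by
        simp only [Sentence.Realize, Formula.realize_not, Formula.realize_rel,
          Term.realize_constants]
        show ¬ RelMap R (fun i => xv i)
        exact fun h => hn (by simpa using h)
      have hK := hqd ((Relations.formula (L := L[[N]]) ((L.lhomWithConstants N).onRelation R)
          (fun i => (L.con (xv i)).term)).not)
        ((BoundedFormula.IsAtomic.rel _ _).isQF.not) hsent
      simp only [Sentence.Realize, Formula.realize_not, Formula.realize_rel,
        Term.realize_constants, LHom.map_onRelation] at hK
      exact hK hK0
    · intro hN0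
      have hsent : N ⊨ (Relations.formula (L := L[[N]]) ((L.lhomWithConstants N).onRelation R)
          (fun i => (L.con (xv i)).term) : L[[N]].Formula Empty) := by
        simp only [Sentence.Realize, Formula.realize_rel, Term.realize_constants]
        show RelMap R (fun i => xv i)
        simpa using hN0
      have hK := hqd (Relations.formula (L := L[[N]]) ((L.lhomWithConstants N).onRelation R)
          (fun i => (L.con (xv i)).term))
        ((BoundedFormula.IsAtomic.rel _ _).isQF) hsent
      simp only [Sentence.Realize, Formula.realize_rel, Term.realize_constants,
        LHom.map_onRelation] at hK
      exact hK

theorem realize_iff_of_ec (T : L.Theory)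
    (H : ∀ (M : Type (max u v)) [L.Structure M] [Nonempty M], M ⊨ T → IsECFor T M)
    {α : Type*} {n : ℕ} (φ : L.BoundedFormula α n) :
    ∀ (M N : Type (max u v)) [L.Structure M] [L.Structure N] [Nonempty M] [Nonempty N],
    M ⊨ T → N ⊨ T → ∀ (f : M ↪[L] N) (x : α → M) (y : Fin n → M),
    (φ.Realize (⇑f ∘ x) (⇑f ∘ y) ↔ φ.Realize x y) := by
  induction φ with
  | falsum =>
    intro M N _ _ _ _ hM hN f x y
    simp [BoundedFormula.Realize]
  | equal t₁ t₂ =>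
    intro M N _ _ _ _ hM hN f x y
    simp only [BoundedFormula.Realize]
    have he : Sum.elim (⇑f ∘ x) (⇑f ∘ y) = ⇑f ∘ Sum.elim x y := by
      funext a; cases a <;> rfl
    rw [he, HomClass.realize_term, HomClass.realize_term]
    exact ⟨fun h => f.injective h, fun h => congrArg f h⟩
  | rel R ts =>
    intro M N _ _ _ _ hM hN f x y
    simp only [BoundedFormula.Realize]
    have he : Sum.elim (⇑f ∘ x) (⇑f ∘ y) = ⇑f ∘ Sum.elim x y := by
      funext a; cases a <;> rfl
    simp_rw [he, HomClass.realize_term]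
    exact StrongHomClass.map_rel f R fun i => (ts i).realize (Sum.elim x y)
  | imp φ₁ φ₂ ih1 ih2 =>
    intro M N _ _ _ _ hM hN f x y
    rw [BoundedFormula.realize_imp, BoundedFormula.realize_imp,
      ih1 M N hM hN f x y, ih2 M N hM hN f x y]
  | all φ ih =>
    intro M N _ _ _ _ hM hN f x y
    rw [BoundedFormula.realize_all, BoundedFormula.realize_all]
    constructor
    · intro hh a
      have := (ih M N hM hN f x (Fin.snoc y a)).1 ?_
      · exact this
      · have : ⇑f ∘ Fin.snoc y a = Fin.snoc (⇑f ∘ y) (f a) := Fin.comp_snoc _ _ _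
        rw [this]
        exact hh (f a)
    · intro hh c
      obtain ⟨P, iP, nP, hE, g, hgf⟩ :=
        exists_amalgam ((H M hM).2 N hN f)
      have hPT : P ⊨ T := (hE.theory_model_iff T).1 hM
      have hiff := ih N P hN hPT g (⇑f ∘ x) (Fin.snoc (⇑f ∘ y) c)
      apply hiff.1
      have h1 : ⇑g ∘ (⇑f ∘ x) = ⇑hE ∘ x := by funext a; exact hgf (x a)
      have h2 : ⇑g ∘ Fin.snoc (⇑f ∘ y) c = Fin.snoc (⇑hE ∘ y) (g c) := by
        rw [Fin.comp_snoc]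
        have : ⇑g ∘ (⇑f ∘ y) = ⇑hE ∘ y := by funext a; exact hgf (y a)
        rw [this]
      rw [h1, h2]
      have hall : φ.all.Realize (⇑hE ∘ x) (⇑hE ∘ y) :=
        (hE.map_boundedFormula φ.all x y).2 (BoundedFormula.realize_all.2 hh)
      exact BoundedFormula.realize_all.1 hall (g c)

/-- Robinson's test, first equivalence: a theory is model complete iff every model of it
is existentially closed for it. -/
theorem isModelComplete_iff_forall_isECFor (T : L.Theory) :
    IsModelComplete T ↔
      ∀ (M : Type (max u v)) [L.Structure M] [Nonempty M], M ⊨ T → IsECFor T M := by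
  constructor
  · intro h M _ _ hM
    exact ⟨hM, fun N _ _ hN f k φ _ x hx => (h M N hM hN f k φ x).1 hx⟩
  · intro H M N _ _ _ _ hM hN f n φ x
    have key := realize_iff_of_ec T H φ M N hM hN f x default
    have hfd : ⇑f ∘ (default : Fin 0 → M) = default := by
      funext i; exact i.elim0
    rw [hfd] at key
    exact key
end

section
/- (Robinson's test, second equivalence) A first-order theory T is model complete if and only if every L-formula φ(x₁,…,xₙ) is equivalent modulo T to a universal formula, i.e., there is a formula ψ(x₁,…,xₙ) of the form ∀ȳ χ with χ quantifier-free such that T ⊨ ∀x₁…∀xₙ (φ ↔ ψ). -/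
open FirstOrder FirstOrder.Language

universe u v

variable {L : FirstOrder.Language.{u, v}}

namespace RobinsonAux

open FirstOrder.Language.BoundedFormula FirstOrder.Language.Structure

variable {α : Type*} {M : Type w} [L.Structure M]
universe w

theorem realize_foldr_inf (l : List (L.Formula α)) (v : α → M) :
    (l.foldr (· ⊓ ·) ⊤).Realize v ↔ ∀ θ ∈ l, θ.Realize v := by
  induction l with
  | nil => simp [Formula.Realize]
  | cons a l ih =>
      simp only [List.foldr_cons, List.mem_cons, forall_eq_or_imp, ← ih]
      exact BoundedFormula.realize_inf

theorem isQF_foldr_inf {l : List (L.Formula α)} (h : ∀ θ ∈ l, θ.IsQF) :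
    (l.foldr (· ⊓ ·) ⊤).IsQF := by
  induction l with
  | nil => exact BoundedFormula.IsQF.top
  | cons a l ih =>
      exact (h a (by simp)).inf (ih fun θ hθ => h θ (by simp [hθ]))

theorem realize_castLE_of_isQF {m k : ℕ} (h : m ≤ k) {φ : L.BoundedFormula α m}
    (hφ : φ.IsQF) (v : α → M) (xs : Fin k → M) :
    (φ.castLE h).Realize v xs ↔ φ.Realize v (xs ∘ Fin.castLE h) := by
  induction hφ with
  | falsum => rfl
  | of_isAtomic hA =>
    cases hA with
    | equal t₁ t₂ =>
        simp [Term.bdEqual, BoundedFormula.castLE, BoundedFormula.Realize, Term.realize_relabel,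
          Sum.elim_comp_map]
    | rel R ts =>
        simp [Relations.boundedFormula, BoundedFormula.castLE, BoundedFormula.Realize, Term.realize_relabel,
          Sum.elim_comp_map]
  | imp _ _ ih1 ih2 => simp [BoundedFormula.castLE, BoundedFormula.realize_imp, ih1, ih2]

theorem IsQF.restrictFreeVar' [DecidableEq α] {β : Type*} :
    ∀ {n : ℕ} {φ : L.BoundedFormula α n}, φ.IsQF → ∀ (f : φ.freeVarFinset → β),
      (φ.restrictFreeVar f).IsQF := by
  intro n φ hφ
  induction hφ with
  | falsum => exact fun f => BoundedFormula.isQF_bot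
  | of_isAtomic hA =>
    cases hA with
    | equal t₁ t₂ => exact fun f => (BoundedFormula.IsAtomic.equal _ _).isQF
    | rel R ts => exact fun f => (BoundedFormula.IsAtomic.rel _ _).isQF
  | imp _ _ ih1 ih2 => exact fun f => (ih1 _).imp (ih2 _)

theorem isUniversalFormula_top : IsUniversalFormula (⊤ : L.Formula α) :=
  ⟨0, ⊤, BoundedFormula.IsQF.top, rfl⟩

theorem pad_castLE {k m : ℕ} (hk : k ≤ m) [Nonempty M] (ys : Fin k → M) :
    (fun i : Fin m => if h : (i : ℕ) < k then ys ⟨i, h⟩ else Classical.arbitrary M)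
      ∘ Fin.castLE hk = ys := by
  funext j
  simp [Fin.castLE]

theorem inf_equiv_universal {ψ₁ ψ₂ : L.Formula α} (h₁ : IsUniversalFormula ψ₁)
    (h₂ : IsUniversalFormula ψ₂) :
    ∃ ψ : L.Formula α, IsUniversalFormula ψ ∧
      ∀ (M : Type w) [L.Structure M] [Nonempty M] (v : α → M),
        ψ.Realize v ↔ ψ₁.Realize v ∧ ψ₂.Realize v := by
  obtain ⟨k₁, χ₁, hq₁, rfl⟩ := h₁
  obtain ⟨k₂, χ₂, hq₂, rfl⟩ := h₂
  refine ⟨((χ₁.castLE (le_max_left k₁ k₂)) ⊓ (χ₂.castLE (le_max_right k₁ k₂))).alls,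
    ⟨_, _, (hq₁.castLE).inf (hq₂.castLE), rfl⟩, ?_⟩
  intro M _ _ v
  simp only [BoundedFormula.realize_alls, BoundedFormula.realize_inf]
  constructor
  · intro h
    constructor
    · intro ys
      have := (h (fun i : Fin (max k₁ k₂) =>
        if h : (i : ℕ) < k₁ then ys ⟨i, h⟩ else Classical.arbitrary M)).1
      rwa [realize_castLE_of_isQF _ hq₁, pad_castLE] at this
    · intro ys
      have := (h (fun i : Fin (max k₁ k₂) =>
        if h : (i : ℕ) < k₂ then ys ⟨i, h⟩ else Classical.arbitrary M)).2
      rwa [realize_castLE_of_isQF _ hq₂, pad_castLE] at this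
  · rintro ⟨ha, hb⟩ xs
    exact ⟨(realize_castLE_of_isQF _ hq₁ v xs).2 (ha _),
      (realize_castLE_of_isQF _ hq₂ v xs).2 (hb _)⟩

theorem list_equiv_universal (l : List (L.Formula α)) (h : ∀ ψ ∈ l, IsUniversalFormula ψ) :
    ∃ Ψ : L.Formula α, IsUniversalFormula Ψ ∧
      ∀ (M : Type w) [L.Structure M] [Nonempty M] (v : α → M),
        Ψ.Realize v ↔ ∀ ψ ∈ l, ψ.Realize v := by
  induction l with
  | nil => exact ⟨⊤, isUniversalFormula_top, by simp [Formula.Realize]⟩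
  | cons a l ih =>
      obtain ⟨Ψ, hΨ, hΨr⟩ := ih fun ψ hψ => h ψ (by simp [hψ])
      obtain ⟨Ψ', hΨ', hΨr'⟩ := inf_equiv_universal (h a (by simp)) hΨ
      refine ⟨Ψ', hΨ', fun M _ _ v => ?_⟩
      rw [hΨr' M v]
      simp [hΨr M v]

section EqGuard

variable {n m : ℕ} {M' : Type*} [L.Structure M']

/-- guard a base formula by equations `vᵢ = vⱼ` for all pairs in `prs` with `x p.1 = x p.2`. -/
noncomputable def eqGuard (x : Fin n → M) (prs : List (Fin n × Fin n))
    (base : L.BoundedFormula (Fin n) m) : L.BoundedFormula (Fin n) m :=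
  letI := Classical.dec
  prs.foldr (fun p acc => if x p.1 = x p.2 then
    ((Term.var (Sum.inl p.1)).bdEqual (Term.var (Sum.inl p.2))).imp acc else acc) base

theorem isQF_eqGuard {x : Fin n → M} {prs : List (Fin n × Fin n)}
    {base : L.BoundedFormula (Fin n) m} (h : base.IsQF) : (eqGuard x prs base).IsQF := by
  induction prs with
  | nil => exact h
  | cons p prs ih =>
      rw [eqGuard, List.foldr_cons]
      split
      · exact ((BoundedFormula.IsAtomic.equal _ _).isQF).imp ih
      · exact ih

theorem realize_eqGuard {x : Fin n → M} {prs : List (Fin n × Fin n)}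
    {base : L.BoundedFormula (Fin n) m} {v : Fin n → M'} {xs : Fin m → M'} :
    (eqGuard x prs base).Realize v xs ↔
      ((∀ p ∈ prs, x p.1 = x p.2 → v p.1 = v p.2) → base.Realize v xs) := by
  induction prs with
  | nil => simp [eqGuard]
  | cons p prs ih =>
      rw [eqGuard, List.foldr_cons]
      split
      · rename_i hx
        simp only [BoundedFormula.realize_imp, BoundedFormula.realize_bdEqual,
          Term.realize_var, Sum.elim_inl]
        rw [show (prs.foldr _ base : L.BoundedFormula (Fin n) m) = eqGuard x prs base from rfl, ih]
        constructor
        · intro h hall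
          exact h (hall p (by simp) hx) (fun q hq => hall q (by simp [hq]))
        · intro h hv hall
          refine h ?_
          intro q hq
          rcases List.mem_cons.1 hq with rfl | hq'
          · intro _; exact hv
          · exact hall q hq'
      · rename_i hx
        rw [show (prs.foldr _ base : L.BoundedFormula (Fin n) m) = eqGuard x prs base from rfl, ih]
        constructor
        · intro h hall; exact h (fun q hq => hall q (by simp [hq]))
        · intro h hall
          refine h ?_
          intro q hq
          rcases List.mem_cons.1 hq with rfl | hq'
          · intro hc; exact absurd hc hx
          · exact hall q hq'

end EqGuard

theorem IsUniversalFormula.realize_of_embedding {ψ : L.Formula α} (h : IsUniversalFormula ψ)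
    {N : Type*} [L.Structure N] (f : M ↪[L] N) (x : α → M)
    (hx : ψ.Realize (f ∘ x)) : ψ.Realize x := by
  obtain ⟨k, χ, hQF, rfl⟩ := h
  rw [BoundedFormula.realize_alls] at hx ⊢
  intro ys
  exact (hQF.realize_embedding f).1 (hx (f ∘ ys))

theorem exists_universal_of_qf (T : L.Theory) {n : ℕ} (φ : L.Formula (Fin n))
    (x : Fin n → M) {θ : L.Formula M} (hθ : θ.IsQF)
    (hT : ∀ (M' : Theory.ModelType.{u, v, max u v} T) (w : M → M'),
        φ.Realize (w ∘ x) → ¬ θ.Realize w) :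
    ∃ ψ : L.Formula (Fin n), IsUniversalFormula ψ ∧
      (∀ (M' : Theory.ModelType.{u, v, max u v} T) (v : Fin n → M'), (φ.imp ψ).Realize v) ∧
      (ψ.Realize x → ¬ θ.Realize (id : M → M)) := by
  classical
  set s : Set M := ↑θ.freeVarFinset with hs
  have hsub : ↑θ.freeVarFinset ⊆ s := subset_rfl
  set θ₀ := θ.restrictFreeVar (Set.inclusion hsub) with hθ₀
  let e := Fintype.equivFin ↥s
  set k := Fintype.card ↥s with hk
  set g : ↥s → (Fin n) ⊕ (Fin k) :=
    (fun a => if h : ∃ i, x i = ↑a then Sum.inl h.choose else Sum.inr (e a)) with hg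
  set body : L.BoundedFormula (Fin n) (k + 0) :=
    eqGuard x ((List.finRange n) ×ˢ (List.finRange n)) ((θ₀.relabel g).not) with hbody
  have hbodyQF : body.IsQF :=
    isQF_eqGuard ((IsQF.restrictFreeVar' hθ _).relabel g).not
  refine ⟨body.alls, ⟨_, _, hbodyQF, rfl⟩, ?_, ?_⟩
  · intro M' v
    rw [Formula.realize_imp]
    intro hφv
    rw [BoundedFormula.realize_alls]
    intro ys
    rw [realize_eqGuard]
    intro heq
    rw [BoundedFormula.realize_not, BoundedFormula.realize_relabel]
    set v' : ↥s → M' := Sum.elim v (ys ∘ Fin.castAdd 0) ∘ g with hv'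
    set w : M → M' := (fun a => if h : ∃ i, x i = a then v h.choose else
      (if hsa : a ∈ s then v' ⟨a, hsa⟩ else Classical.arbitrary M')) with hw
    have hwx : w ∘ x = v := by
      funext i
      have hex : ∃ j, x j = x i := ⟨i, rfl⟩
      simp only [hw, Function.comp_apply, dif_pos hex]
      exact heq (hex.choose, i) (by simp [List.mem_product, List.mem_finRange])
        hex.choose_spec
    have hwv' : w ∘ (Subtype.val : ↥s → M) = v' := by
      funext a
      by_cases h : ∃ i, x i = ↑a
      · have hga : g a = Sum.inl h.choose := dif_pos h
        simp only [hw, Function.comp_apply, dif_pos h, hv', hga, Sum.elim_inl]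
      · have hga : g a = Sum.inr (e a) := dif_neg h
        simp only [hw, Function.comp_apply, dif_neg h, dif_pos a.2]
    have hnθ := hT M' w (by rwa [hwx])
    intro hcon
    apply hnθ
    have hthis : θ₀.Realize (w ∘ (Subtype.val : ↥s → M)) (ys ∘ Fin.natAdd k) := by
      rwa [hwv']
    rw [hθ₀, realize_restrictFreeVar' hsub] at hthis
    rwa [Subsingleton.elim (ys ∘ Fin.natAdd k) (default : Fin 0 → M')] at hthis
  · intro hψ hθid
    rw [BoundedFormula.realize_alls] at hψ
    have hys := hψ (fun j => ↑(e.symm j))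
    rw [realize_eqGuard] at hys
    have h2 := hys (fun p _ h => h)
    rw [BoundedFormula.realize_not, BoundedFormula.realize_relabel] at h2
    apply h2
    have hval : (Sum.elim x ((fun j : Fin (k + 0) => ((e.symm j : ↥s) : M)) ∘ Fin.castAdd 0) ∘ g)
        = (id ∘ (Subtype.val : ↥s → M)) := by
      funext a
      by_cases h : ∃ i, x i = ↑a
      · have hga : g a = Sum.inl h.choose := dif_pos h
        simp only [Function.comp_apply, hga, Sum.elim_inl, id_eq]
        exact h.choose_spec
      · have hga : g a = Sum.inr (e a) := dif_neg h
        simp only [Function.comp_apply, hga, Sum.elim_inr, id_eq]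
        have hc : (Fin.castAdd 0 (e a)) = e a := rfl
        rw [hc, Equiv.symm_apply_apply]
    rw [hval, hθ₀, realize_restrictFreeVar' hsub]
    rwa [Subsingleton.elim ((fun j : Fin (k + 0) => ((e.symm j : ↥s) : M)) ∘ Fin.natAdd k)
      (default : Fin 0 → M)]

/-- The atomic diagram of `M`: all quantifier-free sentences with parameters true in `M`. -/
def diag (M : Type w) [L.Structure M] : L[[M]].Theory :=
  {σ : L[[M]].Sentence |
    ∃ θ : L.Formula M, θ.IsQF ∧ θ.Realize (id : M → M) ∧ σ = Formula.equivSentence θ}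

theorem exists_embedding_of_models_diag {N : Type*} [L[[M]].Structure N] [L.Structure N]
    [(L.lhomWithConstants M).IsExpansionOn N] [Nonempty N] (hN : N ⊨ diag (L := L) M) :
    ∃ emb : M ↪[L] N, ∀ a : M, emb a = ((L.con a : L[[M]].Constants) : N) := by
  haveI := hN
  set c : M → N := fun a => ((L.con a : L[[M]].Constants) : N) with hc
  have key : ∀ θ : L.Formula M, θ.IsQF → θ.Realize (id : M → M) → θ.Realize c := by
    intro θ h1 h2
    have hmem : Formula.equivSentence θ ∈ diag (L := L) M := ⟨θ, h1, h2, rfl⟩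
    have := Theory.realize_sentence_of_mem (M := N) (diag (L := L) M) hmem
    rwa [Formula.realize_equivSentence] at this
  have hinj : Function.Injective c := by
    intro a b hab
    by_contra hne
    have h1 : ((Term.var a : L.Term M).equal (Term.var b)).not.IsQF :=
      (BoundedFormula.IsAtomic.equal _ _).isQF.not
    have h2 : ((Term.var a : L.Term M).equal (Term.var b)).not.Realize (id : M → M) := by
      simp only [Formula.realize_not, Formula.realize_equal, Term.realize_var, id_eq]
      exact hne
    have := key _ h1 h2
    simp only [Formula.realize_not, Formula.realize_equal, Term.realize_var] at this
    exact this hab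
  have hfun : ∀ {l : ℕ} (f : L.Functions l) (vs : Fin l → M),
      c (funMap f vs) = funMap f (c ∘ vs) := by
    intro l f vs
    have h1 : ((Term.func f (fun i => Term.var (vs i)) : L.Term M).equal
        (Term.var (funMap f vs))).IsQF := (BoundedFormula.IsAtomic.equal _ _).isQF
    have h2 : ((Term.func f (fun i => Term.var (vs i)) : L.Term M).equal
        (Term.var (funMap f vs))).Realize (id : M → M) := by
      simp [Formula.realize_equal, Term.realize]
    have := key _ h1 h2
    simp only [Formula.realize_equal, Term.realize, Term.realize_var] at this
    exact this.symm
  have hrel : ∀ {l : ℕ} (r : L.Relations l) (vs : Fin l → M),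
      RelMap r (c ∘ vs) ↔ RelMap r vs := by
    intro l r vs
    constructor
    · intro h
      by_contra hn
      have h1 : (Relations.formula r (fun i => (Term.var (vs i) : L.Term M))).not.IsQF :=
        (BoundedFormula.IsAtomic.rel _ _).isQF.not
      have h2 : (Relations.formula r (fun i => (Term.var (vs i) : L.Term M))).not.Realize
          (id : M → M) := by
        simp only [Formula.realize_not, Formula.realize_rel, Term.realize_var, id_eq]
        exact hn
      have := key _ h1 h2
      simp only [Formula.realize_not, Formula.realize_rel, Term.realize_var] at this
      exact this (by exact h)
    · intro h
      have h1 : (Relations.formula r (fun i => (Term.var (vs i) : L.Term M))).IsQF :=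
        (BoundedFormula.IsAtomic.rel _ _).isQF
      have h2 : (Relations.formula r (fun i => (Term.var (vs i) : L.Term M))).Realize
          (id : M → M) := by
        simp only [Formula.realize_rel, Term.realize_var, id_eq]
        exact h
      have := key _ h1 h2
      simp only [Formula.realize_rel, Term.realize_var] at this
      exact this
  exact ⟨⟨⟨c, hinj⟩, fun f vs => hfun f vs, fun r vs => hrel r vs⟩, fun a => rfl⟩

theorem key_realize (T : L.Theory) (hMC : IsModelComplete T) {n : ℕ} (φ : L.Formula (Fin n))
    (K : Type (max u v)) [L.Structure K] [Nonempty K] (hK : K ⊨ T) (x : Fin n → K)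
    (hx : ∀ ψ : L.Formula (Fin n), IsUniversalFormula ψ →
      (∀ (M' : Theory.ModelType.{u, v, max u v} T) (v : Fin n → M'), (φ.imp ψ).Realize v) →
      ψ.Realize x) :
    φ.Realize x := by
  classical
  set S : L[[K]].Theory := ((L.lhomWithConstants K).onTheory T ∪ diag (L := L) K)
    ∪ {Formula.equivSentence (φ.relabel x)} with hS
  have hsat : S.IsSatisfiable := by
    by_contra hns
    rw [Theory.isSatisfiable_iff_isFinitelySatisfiable, Theory.IsFinitelySatisfiable] at hns
    push_neg at hns
    obtain ⟨T0, hT0sub, hT0unsat⟩ := hns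
    set lθ : List (L.Formula K) := T0.toList.filterMap
      (fun σ => if h : σ ∈ diag (L := L) K then some h.choose else none) with hlθ
    have hlmem : ∀ ϑ ∈ lθ, ϑ.IsQF ∧ ϑ.Realize (id : K → K) := by
      intro ϑ hϑ
      rw [hlθ, List.mem_filterMap] at hϑ
      obtain ⟨σ, hσ, hϑ2⟩ := hϑ
      by_cases h : σ ∈ diag (L := L) K
      · rw [dif_pos h] at hϑ2
        obtain rfl := Option.some.inj hϑ2
        exact ⟨h.choose_spec.1, h.choose_spec.2.1⟩
      · rw [dif_neg h] at hϑ2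
        exact absurd hϑ2 (by simp)
    set θ : L.Formula K := lθ.foldr (· ⊓ ·) ⊤ with hθdef
    have hθQF : θ.IsQF := isQF_foldr_inf fun ϑ hϑ => (hlmem ϑ hϑ).1
    have hT' : ∀ (M' : Theory.ModelType.{u, v, max u v} T) (w : K → M'),
        φ.Realize (w ∘ x) → ¬ θ.Realize w := by
      intro M' w hφw hθw
      letI : (constantsOn K).Structure M' := constantsOn.structure w
      have hcon : ∀ a : K, ((L.con a : L[[K]].Constants) : M') = w a := fun a => rfl
      have hmodel : (M' : Type (max u v)) ⊨ (↑T0 : L[[K]].Theory) := by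
        rw [Theory.model_iff]
        intro σ hσ
        rcases hT0sub hσ with (hσT | hσD) | hσφ
        · haveI : (M' : Type (max u v)) ⊨ (L.lhomWithConstants K).onTheory T :=
            (LHom.onTheory_model _ _).2 M'.is_model
          exact Theory.realize_sentence_of_mem _ hσT
        · have hϑ : hσD.choose ∈ lθ := by
            rw [hlθ, List.mem_filterMap]
            exact ⟨σ, Finset.mem_toList.2 hσ, dif_pos hσD⟩
          have hϑr : hσD.choose.Realize w := (realize_foldr_inf lθ w).1 hθw _ hϑ
          rw [hσD.choose_spec.2.2, Formula.realize_equivSentence]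
          simpa only [hcon] using hϑr
        · rw [Set.mem_singleton_iff.1 hσφ, Formula.realize_equivSentence,
            Formula.realize_relabel]
          have : (fun a : K => ((L.con a : L[[K]].Constants) : M')) ∘ x = w ∘ x := by
            funext i; exact hcon (x i)
          rwa [this]
      exact hT0unsat ⟨(Theory.ModelType.of _ M')⟩
    obtain ⟨ψ, hu, himp, hcontra⟩ := exists_universal_of_qf T φ x hθQF hT'
    exact hcontra (hx ψ hu himp) (realize_foldr_inf lθ (id : K → K) |>.2
      fun ϑ hϑ => (hlmem ϑ hϑ).2)
  obtain ⟨N'⟩ := hsat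
  letI : L.Structure N' := (L.lhomWithConstants K).reduct N'
  haveI hexp : (L.lhomWithConstants K).IsExpansionOn N' :=
    LHom.isExpansionOn_reduct (L.lhomWithConstants K) N'
  have hdiag : (N' : Type (max u v)) ⊨ diag (L := L) K :=
    N'.is_model.mono ((Set.subset_union_right).trans Set.subset_union_left)
  have hNT : (N' : Type (max u v)) ⊨ T :=
    (LHom.onTheory_model _ _).1
      (N'.is_model.mono ((Set.subset_union_left).trans Set.subset_union_left))
  obtain ⟨emb, hemb⟩ := exists_embedding_of_models_diag hdiag
  have hmem : Formula.equivSentence (φ.relabel x) ∈ S := Set.mem_union_right _ rfl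
  haveI := N'.is_model
  have hφx := Theory.realize_sentence_of_mem (M := N') S hmem
  rw [Formula.realize_equivSentence, Formula.realize_relabel] at hφx
  have hcomp : (fun a : K => ((L.con a : L[[K]].Constants) : N')) ∘ x = emb ∘ x := by
    funext i
    exact (hemb (x i)).symm
  rw [hcomp] at hφx
  exact (hMC K N' hK hNT emb n φ x).1 hφx

end RobinsonAux

/-- Robinson's test, second equivalence: a theory is model complete iff every formula is
equivalent, modulo the theory, to a universal formula. -/
theorem isModelComplete_iff_forall_equiv_universal (T : L.Theory) :
    IsModelComplete T ↔
      ∀ (n : ℕ) (φ : L.Formula (Fin n)), ∃ ψ : L.Formula (Fin n),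
        IsUniversalFormula ψ ∧ T ⊨ᵇ φ.iff ψ := by
  constructor
  · intro hMC n φ
    classical
    set U : Set (L.Formula (Fin n)) := {ψ | IsUniversalFormula ψ ∧
      ∀ (M' : Theory.ModelType.{u, v, max u v} T) (v : Fin n → M'), (φ.imp ψ).Realize v}
      with hU
    set Sig : L[[Fin n]].Theory := ((L.lhomWithConstants (Fin n)).onTheory T ∪
      Formula.equivSentence '' U) ∪ {Formula.equivSentence φ.not} with hSig
    have hunsat : ¬ Sig.IsSatisfiable := by
      rintro ⟨K⟩
      letI : L.Structure K := (L.lhomWithConstants (Fin n)).reduct K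
      haveI hexp : (L.lhomWithConstants (Fin n)).IsExpansionOn K :=
        LHom.isExpansionOn_reduct (L.lhomWithConstants (Fin n)) K
      haveI := K.is_model
      set x : Fin n → K := fun i => ((L.con i : L[[Fin n]].Constants) : K) with hx
      have hKT : (K : Type (max u v)) ⊨ T :=
        (LHom.onTheory_model _ _).1
          (K.is_model.mono ((Set.subset_union_left).trans Set.subset_union_left))
      have hφK : φ.Realize x := by
        refine RobinsonAux.key_realize T hMC φ K hKT x ?_
        intro ψ hψU himp
        have hmem : Formula.equivSentence ψ ∈ Sig :=
          Set.mem_union_left _ (Set.mem_union_right _ ⟨ψ, ⟨hψU, himp⟩, rfl⟩)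
        have := Theory.realize_sentence_of_mem (M := K) Sig hmem
        rwa [Formula.realize_equivSentence] at this
      have hmem' : Formula.equivSentence φ.not ∈ Sig := Set.mem_union_right _ rfl
      have hnφ := Theory.realize_sentence_of_mem (M := K) Sig hmem'
      rw [Formula.realize_equivSentence, Formula.realize_not] at hnφ
      exact hnφ hφK
    rw [Theory.isSatisfiable_iff_isFinitelySatisfiable, Theory.IsFinitelySatisfiable] at hunsat
    push_neg at hunsat
    obtain ⟨T0, hT0sub, hT0unsat⟩ := hunsat
    set lψ : List (L.Formula (Fin n)) := T0.toList.filterMap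
      (fun σ => if h : ∃ ψ, ψ ∈ U ∧ Formula.equivSentence ψ = σ then some h.choose else none)
      with hlψ
    have hlmem : ∀ ψ ∈ lψ, ψ ∈ U := by
      intro ψ hψ
      rw [hlψ, List.mem_filterMap] at hψ
      obtain ⟨σ, hσ, hψ2⟩ := hψ
      by_cases h : ∃ ψ', ψ' ∈ U ∧ Formula.equivSentence ψ' = σ
      · rw [dif_pos h] at hψ2
        obtain rfl := Option.some.inj hψ2
        exact h.choose_spec.1
      · rw [dif_neg h] at hψ2
        exact absurd hψ2 (by simp)
    obtain ⟨Ψ, hΨU, hΨr⟩ := RobinsonAux.list_equiv_universal lψ (fun ψ hψ => (hlmem ψ hψ).1)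
    refine ⟨Ψ, hΨU, Theory.models_formula_iff.2 ?_⟩
    intro M' v
    rw [Formula.realize_iff]
    constructor
    · intro hφv
      rw [hΨr M' v]
      intro ψ hψ
      exact Formula.realize_imp.1 ((hlmem ψ hψ).2 M' v) hφv
    · intro hΨv
      by_contra hnφ
      letI : (constantsOn (Fin n)).Structure M' := constantsOn.structure v
      have hcon : ∀ i : Fin n, ((L.con i : L[[Fin n]].Constants) : M') = v i := fun i => rfl
      have hmodel : (M' : Type (max u v)) ⊨ (↑T0 : L[[Fin n]].Theory) := by
        rw [Theory.model_iff]
        intro σ hσ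
        rcases hT0sub hσ with (hσT | hσU) | hσφ
        · haveI : (M' : Type (max u v)) ⊨ (L.lhomWithConstants (Fin n)).onTheory T :=
            (LHom.onTheory_model _ _).2 M'.is_model
          exact Theory.realize_sentence_of_mem _ hσT
        · have hex : ∃ ψ', ψ' ∈ U ∧ Formula.equivSentence ψ' = σ := by
            obtain ⟨ψ', h1, h2⟩ := hσU
            exact ⟨ψ', h1, h2⟩
          have hψl : hex.choose ∈ lψ := by
            rw [hlψ, List.mem_filterMap]
            exact ⟨σ, Finset.mem_toList.2 hσ, dif_pos hex⟩
          have := (hΨr M' v).1 hΨv _ hψl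
          rw [← hex.choose_spec.2, Formula.realize_equivSentence]
          simpa only [hcon] using this
        · rw [Set.mem_singleton_iff.1 hσφ, Formula.realize_equivSentence, Formula.realize_not]
          have : (fun i : Fin n => ((L.con i : L[[Fin n]].Constants) : M')) = v := by
            funext i; exact hcon i
          rwa [this]
      exact hT0unsat ⟨(Theory.ModelType.of _ M')⟩
  · intro h M N _ _ _ _ hMT hNT f n φ x
    haveI := hMT
    haveI := hNT
    obtain ⟨ψ, hψU, hψ⟩ := h n φ
    obtain ⟨ψ', hψ'U, hψ'⟩ := h n φ.not
    constructor
    · intro hfx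
      have h1 : ψ.Realize (f ∘ x) := (Formula.realize_iff.1 (hψ.realize_formula N)).1 hfx
      have h2 := RobinsonAux.IsUniversalFormula.realize_of_embedding hψU f x h1
      exact (Formula.realize_iff.1 (hψ.realize_formula M)).2 h2
    · intro hxr
      by_contra hfx
      have h1 : φ.not.Realize (f ∘ x) := Formula.realize_not.2 hfx
      have h2 := (Formula.realize_iff.1 (hψ'.realize_formula N)).1 h1
      have h3 := RobinsonAux.IsUniversalFormula.realize_of_embedding hψ'U f x h2
      exact Formula.realize_not.1 ((Formula.realize_iff.1 (hψ'.realize_formula M)).2 h3) hxr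
end

section
/- (Uniqueness of the model companion) If T₁* and T₂* are both model companions of a first-order theory T, then T₁* and T₂* have the same models: every L-structure is a model of T₁* if and only if it is a model of T₂*. -/
open FirstOrder FirstOrder.Language

universe u v

variable {L : FirstOrder.Language.{u, v}}

namespace MCUnique

open FirstOrder.Language.DirectLimit

section Limit

variable {G : ℕ → Type (max u v)} [inst : ∀ i, L.Structure (G i)]
variable (f : ∀ i j : ℕ, i ≤ j → G i ↪[L] G j)
variable [DirectedSystem G fun i j h => f i j h]

theorem realize_of_aux (P : ℕ → Prop)
    (hcof : ∀ i : ℕ, ∃ j, i ≤ j ∧ P j)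
    (helem : ∀ (i j : ℕ) (h : i ≤ j), P i → P j →
      ∀ (n : ℕ) (φ : L.Formula (Fin n)) (x : Fin n → G i),
        φ.Realize (f i j h ∘ x) ↔ φ.Realize x) :
    ∀ {α : Type} {n : ℕ} (φ : L.BoundedFormula α n) (i : ℕ), P i →
      ∀ (vv : α → G i) (xs : Fin n → G i),
        φ.Realize (DirectLimit.of L ℕ G f i ∘ vv) (DirectLimit.of L ℕ G f i ∘ xs) ↔
          φ.Realize vv xs := by
  intro α n φ
  induction φ with
  | falsum => intro i hi vv xs; rfl
  | equal t₁ t₂ =>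
      intro i hi vv xs
      simp only [BoundedFormula.Realize, ← Sum.comp_elim, HomClass.realize_term]
      exact ⟨fun h => (DirectLimit.of L ℕ G f i).injective h, fun h => congrArg _ h⟩
  | rel R ts =>
      intro i hi vv xs
      simp only [BoundedFormula.Realize, ← Sum.comp_elim, HomClass.realize_term]
      exact StrongHomClass.map_rel (DirectLimit.of L ℕ G f i) R _
  | imp φ ψ ih1 ih2 =>
      intro i hi vv xs
      simp only [BoundedFormula.realize_imp, ih1 i hi, ih2 i hi]
  | all φ ih =>
      intro i hi vv xs
      simp only [BoundedFormula.realize_all]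
      constructor
      · intro h a
        have h' := h (DirectLimit.of L ℕ G f i a)
        rw [← Fin.comp_snoc] at h'
        exact (ih i hi vv _).1 h'
      · intro h b
        obtain ⟨j, y0, rfl⟩ := DirectLimit.exists_of b
        obtain ⟨k, hk, hPk⟩ := hcof (max i j)
        have hik : i ≤ k := le_trans (le_max_left i j) hk
        have hjk : j ≤ k := le_trans (le_max_right i j) hk
        let e : G i ↪ₑ[L] G k := ⟨f i k hik, fun n φ x => helem i k hik hi hPk n φ x⟩
        have hall : (φ.all).Realize ((e : G i → G k) ∘ vv) ((e : G i → G k) ∘ xs) :=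
          (e.map_boundedFormula φ.all vv xs).2 h
        rw [BoundedFormula.realize_all] at hall
        have h2 := hall (f j k hjk y0)
        have h3 := (ih k hPk ((e : G i → G k) ∘ vv) (Fin.snoc ((e : G i → G k) ∘ xs) (f j k hjk y0))).2 h2
        rw [Fin.comp_snoc] at h3
        have hce : (e : G i → G k) = ⇑(f i k hik) := rfl
        rw [hce] at h3
        have hv : ⇑(DirectLimit.of L ℕ G f k) ∘ ⇑(f i k hik) ∘ vv = ⇑(DirectLimit.of L ℕ G f i) ∘ vv := by
          funext a; exact DirectLimit.of_f
        have hx : ⇑(DirectLimit.of L ℕ G f k) ∘ ⇑(f i k hik) ∘ xs = ⇑(DirectLimit.of L ℕ G f i) ∘ xs := by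
          funext a; exact DirectLimit.of_f
        have hy : DirectLimit.of L ℕ G f k (f j k hjk y0) = DirectLimit.of L ℕ G f j y0 :=
          DirectLimit.of_f
        rw [hv, hx, hy] at h3
        exact h3

theorem sentence_realize_of (P : ℕ → Prop)
    (hcof : ∀ i : ℕ, ∃ j, i ≤ j ∧ P j)
    (helem : ∀ (i j : ℕ) (h : i ≤ j), P i → P j →
      ∀ (n : ℕ) (φ : L.Formula (Fin n)) (x : Fin n → G i),
        φ.Realize (f i j h ∘ x) ↔ φ.Realize x)
    (i : ℕ) (hi : P i) (φ : L.Sentence) :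
    (Language.DirectLimit G f) ⊨ φ ↔ G i ⊨ φ := by
  have h := realize_of_aux f P hcof helem φ i hi (default : Empty → G i) default
  rw [Subsingleton.elim ((DirectLimit.of L ℕ G f i) ∘ (default : Empty → G i)) default,
    Subsingleton.elim ((DirectLimit.of L ℕ G f i) ∘ (default : Fin 0 → G i)) default] at h
  exact h

end Limit


section Chain

/-- Bundled nonempty `L`-structure. -/
structure Pt (L : FirstOrder.Language.{u, v}) : Type (max u v + 1) where
  carrier : Type (max u v)
  [str : L.Structure carrier]
  [ne : Nonempty carrier]

attribute [instance] Pt.str Pt.ne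

/-- An extension of the structure `P` modelling `T'`. -/
structure Step (L : FirstOrder.Language.{u, v}) (T' : L.Theory) (P : Pt L) :
    Type (max u v + 1) where
  Q : Pt L
  models : Q.carrier ⊨ T'
  emb : P.carrier ↪[L] Q.carrier

variable (Th : ℕ → L.Theory)

/-- A chain of models of the theories `Th n`, built by recursion with choice. -/
noncomputable def chain (P0 : Pt L) (h0 : P0.carrier ⊨ Th 0)
    (hstep : ∀ n (P : Pt L), P.carrier ⊨ Th n → Nonempty (Step L (Th (n + 1)) P)) :
    ∀ n : ℕ, Σ' P : Pt L, P.carrier ⊨ Th n :=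
  fun n => Nat.rec (motive := fun n => Σ' P : Pt L, P.carrier ⊨ Th n) ⟨P0, h0⟩
    (fun n prev =>
      let s := Classical.choice (hstep n prev.1 prev.2)
      ⟨s.Q, s.models⟩) n

/-- The embeddings along the chain. -/
noncomputable def chainEmb (P0 : Pt L) (h0 : P0.carrier ⊨ Th 0)
    (hstep : ∀ n (P : Pt L), P.carrier ⊨ Th n → Nonempty (Step L (Th (n + 1)) P)) (n : ℕ) :
    (chain Th P0 h0 hstep n).1.carrier ↪[L] (chain Th P0 h0 hstep (n + 1)).1.carrier :=
  (Classical.choice (hstep n (chain Th P0 h0 hstep n).1 (chain Th P0 h0 hstep n).2)).emb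

end Chain

end MCUnique

namespace MCUnique

theorem models_trans (T T₁ T₂ : L.Theory) (h₁ : IsModelCompanion T T₁)
    (h₂ : IsModelCompanion T T₂) (M : Type (max u v)) [L.Structure M] [Nonempty M]
    (hM : M ⊨ T₁) : M ⊨ T₂ := by
  classical
  set Th : ℕ → L.Theory := fun n => if Even n then T₁ else T₂ with hTh
  have hT1 : ∀ n, Even n → Th n = T₁ := fun n hn => by rw [hTh]; exact if_pos hn
  have hT2 : ∀ n, ¬Even n → Th n = T₂ := fun n hn => by rw [hTh]; exact if_neg hn
  have hstep : ∀ n (P : Pt L), P.carrier ⊨ Th n → Nonempty (Step L (Th (n + 1)) P) := by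
    intro n P hP
    by_cases he : Even n
    · obtain ⟨N1, i1, ne1, hN1, ⟨g1⟩⟩ := h₁.2.2 P.carrier (by rwa [hT1 n he] at hP)
      obtain ⟨N2, i2, ne2, hN2, ⟨g2⟩⟩ := h₂.2.1 N1 hN1
      letI := i1; letI := ne1; letI := i2; letI := ne2
      refine ⟨⟨⟨N2⟩, ?_, g2.comp g1⟩⟩
      rw [hT2 (n + 1) (by simp [Nat.even_add_one, he])]
      exact hN2
    · obtain ⟨N1, i1, ne1, hN1, ⟨g1⟩⟩ := h₂.2.2 P.carrier (by rwa [hT2 n he] at hP)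
      obtain ⟨N2, i2, ne2, hN2, ⟨g2⟩⟩ := h₁.2.1 N1 hN1
      letI := i1; letI := ne1; letI := i2; letI := ne2
      refine ⟨⟨⟨N2⟩, ?_, g2.comp g1⟩⟩
      rw [hT1 (n + 1) (by simp [Nat.even_add_one, he])]
      exact hN2
  have h0 : (⟨M⟩ : Pt L).carrier ⊨ Th 0 := by rw [hT1 0 Even.zero]; exact hM
  let C := chain Th ⟨M⟩ h0 hstep
  let G : ℕ → Type (max u v) := fun n => (C n).1.carrier
  letI iG : ∀ n, L.Structure (G n) := fun n => (C n).1.str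
  haveI nG : ∀ n, Nonempty (G n) := fun n => (C n).1.ne
  let f' : ∀ n, G n ↪[L] G (n + 1) := chainEmb Th ⟨M⟩ h0 hstep
  let F : ∀ i j : ℕ, i ≤ j → G i ↪[L] G j := fun i j h => DirectedSystem.natLERec f' i j h
  haveI hDS : DirectedSystem G fun i j h => F i j h := DirectedSystem.natLERec.directedSystem f'
  have hmod : ∀ n, G n ⊨ Th n := fun n => (C n).2
  have hE : ∀ i, Even i → G i ⊨ T₁ := fun i hi => by have := hmod i; rwa [hT1 i hi] at this
  have hO : ∀ i, ¬Even i → G i ⊨ T₂ := fun i hi => by have := hmod i; rwa [hT2 i hi] at this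
  have hcofE : ∀ i : ℕ, ∃ j, i ≤ j ∧ Even j := by
    intro i
    rcases Nat.even_or_odd i with h | h
    · exact ⟨i, le_rfl, h⟩
    · exact ⟨i + 1, Nat.le_succ i, by simpa [Nat.even_add_one] using h⟩
  have hcofO : ∀ i : ℕ, ∃ j, i ≤ j ∧ ¬Even j := by
    intro i
    rcases Nat.even_or_odd i with h | h
    · exact ⟨i + 1, Nat.le_succ i, by simp [Nat.even_add_one, h]⟩
    · exact ⟨i, le_rfl, (Nat.not_even_iff_odd).2 h⟩
  have helemE : ∀ (i j : ℕ) (h : i ≤ j), Even i → Even j →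
      ∀ (n : ℕ) (φ : L.Formula (Fin n)) (x : Fin n → G i),
        φ.Realize (F i j h ∘ x) ↔ φ.Realize x :=
    fun i j h hi hj n φ x => h₁.1 (G i) (G j) (hE i hi) (hE j hj) (F i j h) n φ x
  have helemO : ∀ (i j : ℕ) (h : i ≤ j), ¬Even i → ¬Even j →
      ∀ (n : ℕ) (φ : L.Formula (Fin n)) (x : Fin n → G i),
        φ.Realize (F i j h ∘ x) ↔ φ.Realize x :=
    fun i j h hi hj n φ x => h₂.1 (G i) (G j) (hO i hi) (hO j hj) (F i j h) n φ x
  have key0 : ∀ φ : L.Sentence, (Language.DirectLimit G F ⊨ φ ↔ G 0 ⊨ φ) :=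
    sentence_realize_of F (fun n => Even n) hcofE helemE 0 Even.zero
  have key1 : ∀ φ : L.Sentence, (Language.DirectLimit G F ⊨ φ ↔ G 1 ⊨ φ) :=
    sentence_realize_of F (fun n => ¬Even n) hcofO helemO 1 (by simp)
  haveI hG1 : G 1 ⊨ T₂ := hO 1 (by simp)
  rw [Theory.model_iff]
  intro φ hφ
  have hD : Language.DirectLimit G F ⊨ φ := (key1 φ).2 (Theory.realize_sentence_of_mem (T := T₂) hφ)
  exact (key0 φ).1 hD

end MCUnique

/-- Uniqueness of the model companion: two model companions of the same theory have
exactly the same models. -/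
theorem modelCompanion_unique (T T₁ T₂ : L.Theory)
    (h₁ : IsModelCompanion T T₁) (h₂ : IsModelCompanion T T₂) :
    ∀ (M : Type (max u v)) [L.Structure M] [Nonempty M], M ⊨ T₁ ↔ M ⊨ T₂ := by
  intro M _ _
  exact ⟨MCUnique.models_trans T T₁ T₂ h₁ h₂ M, MCUnique.models_trans T T₂ T₁ h₂ h₁ M⟩
end

section
/- If T* is a model companion of a first-order theory T, then the models of T* are exactly the existentially closed models of T_∀: an L-structure M is a model of T* if and only if M ⊨ T_∀ and M is existentially closed for T_∀. -/
set_option linter.unusedSectionVars false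

open FirstOrder FirstOrder.Language

universe u v

variable {L : FirstOrder.Language.{u, v}}

namespace ModelCompanionAux

open FirstOrder.Language.BoundedFormula

/-! ### Basic realization lemmas -/

lemma realize_up_of_existential {α : Type*} {φ : L.Formula α}
    (h : IsExistentialFormula φ) {M N : Type (max u v)} [L.Structure M] [L.Structure N]
    (f : M ↪[L] N) {x : α → M} (hx : φ.Realize x) : φ.Realize (f ∘ x) := by
  obtain ⟨n, χ, hqf, rfl⟩ := h
  rw [realize_exs] at hx ⊢
  obtain ⟨xs, hxs⟩ := hx
  exact ⟨f ∘ xs, (hqf.realize_embedding f).2 hxs⟩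

lemma realize_down_of_universal {φ : L.Sentence} (h : IsUniversalFormula φ)
    {M N : Type (max u v)} [L.Structure M] [L.Structure N]
    (f : M ↪[L] N) (hx : N ⊨ φ) : M ⊨ φ := by
  obtain ⟨n, χ, hqf, rfl⟩ := h
  rw [Sentence.Realize, realize_alls] at hx ⊢
  intro xs
  have h2 := hqf.realize_embedding f (v := (default : Empty → M)) (xs := xs)
  rw [show ((f : M → N) ∘ (default : Empty → M)) = (default : Empty → N) from
    Subsingleton.elim _ _] at h2
  exact h2.1 (hx _)

lemma model_universalPart_of_embedding {S : L.Theory} {Mm W : Type (max u v)} [L.Structure Mm]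
    [L.Structure W] [Nonempty Mm] [Nonempty W] (g : Mm ↪[L] W) (hW : W ⊨ S) :
    Mm ⊨ universalPart S := by
  refine Theory.model_iff _ |>.2 fun σ hσ => ?_
  obtain ⟨huniv, hcons⟩ := hσ
  haveI := hW
  exact realize_down_of_universal huniv g (hcons.realize_sentence W)

/-! ### Quantifier-free syntax helpers -/

lemma isQF_foldr_inf {α : Type*} {n : ℕ} (l : List (L.BoundedFormula α n))
    (h : ∀ φ ∈ l, φ.IsQF) : (l.foldr (· ⊓ ·) ⊤).IsQF := by
  induction l with
  | nil => exact IsQF.top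
  | cons a l ih => exact (h a (by simp)).inf (ih fun φ hφ => h φ (by simp [hφ]))

lemma isQF_realize_castLE {α : Type*} {W : Type*} [L.Structure W] {m n : ℕ} (h : m ≤ n)
    {φ : L.BoundedFormula α m} (hqf : φ.IsQF) {v : α → W} {xs : Fin n → W} :
    (φ.castLE h).Realize v xs ↔ φ.Realize v (xs ∘ Fin.castLE h) := by
  induction hqf with
  | falsum => exact Iff.rfl
  | of_isAtomic ha =>
    have hsum : Sum.elim v xs ∘ Sum.map id (Fin.castLE h) = Sum.elim v (xs ∘ Fin.castLE h) := by
      funext i; cases i <;> rfl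
    cases ha with
    | equal t₁ t₂ =>
      show ((t₁.relabel (Sum.map id (Fin.castLE h))).bdEqual
          (t₂.relabel (Sum.map id (Fin.castLE h)))).Realize v xs ↔
        (t₁.bdEqual t₂).Realize v (xs ∘ Fin.castLE h)
      rw [realize_bdEqual, realize_bdEqual, Term.realize_relabel, Term.realize_relabel, hsum]
    | rel R ts =>
      show Structure.RelMap R (fun i =>
          Term.realize (Sum.elim v xs) (Term.relabel (Sum.map id (Fin.castLE h)) (ts i))) ↔
        Structure.RelMap R (fun i => Term.realize (Sum.elim v (xs ∘ Fin.castLE h)) (ts i))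
      refine iff_of_eq (congrArg _ (funext fun i => ?_))
      rw [Term.realize_relabel, hsum]
  | imp h1 h2 ih1 ih2 =>
    simp only [castLE, realize_imp, ih1, ih2]

lemma realize_relabel_inr' {α : Type*} {q : ℕ} (χ : L.Formula (Fin q)) {W : Type*}
    [L.Structure W] {v : α → W} {xs : Fin q → W} :
    (BoundedFormula.relabel (Sum.inr : Fin q → α ⊕ Fin q) χ).Realize v xs ↔ χ.Realize xs := by
  rw [BoundedFormula.realize_relabel]
  have h1 : (Sum.elim v (xs ∘ Fin.castAdd 0) ∘ (Sum.inr : Fin q → α ⊕ Fin q)) = xs :=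
    funext fun i => congrArg xs (Fin.ext rfl)
  rw [h1, Subsingleton.elim (xs ∘ Fin.natAdd q) (default : Fin 0 → W)]
  exact Iff.rfl

/-! ### Equality conjunction -/

open Classical in
/-- The conjunction of all equalities between variables whose assigned values in `K` agree. -/
noncomputable def eqBF {α : Type*} [Fintype α] {q : ℕ} {K : Type*} (db : α ⊕ Fin q → K) :
    L.BoundedFormula α q :=
  BoundedFormula.iInf
    (fun p : (α ⊕ Fin q) × (α ⊕ Fin q) =>
      if db p.1 = db p.2 then Term.bdEqual (Term.var p.1) (Term.var p.2) else ⊤)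

lemma eqBF_isQF {α : Type*} [Fintype α] {q : ℕ} {K : Type*} (db : α ⊕ Fin q → K) :
    (eqBF (L := L) db).IsQF := by
  unfold eqBF BoundedFormula.iInf
  apply isQF_foldr_inf
  intro φ hφ
  simp only [List.mem_map] at hφ
  obtain ⟨p, _, rfl⟩ := hφ
  split
  · exact (IsAtomic.equal _ _).isQF
  · exact IsQF.top

lemma realize_eqBF {α : Type*} [Fintype α] {q : ℕ} {K : Type*} (db : α ⊕ Fin q → K)
    {W : Type*} [L.Structure W] {v : α → W} {xs : Fin q → W} :
    (eqBF (L := L) db).Realize v xs ↔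
      ∀ p₁ p₂ : α ⊕ Fin q, db p₁ = db p₂ → Sum.elim v xs p₁ = Sum.elim v xs p₂ := by
  unfold eqBF
  rw [realize_iInf]
  constructor
  · intro h p₁ p₂ hdb
    have := h (p₁, p₂)
    rw [if_pos hdb] at this
    simpa [Term.realize] using this
  · intro h p
    split
    · next hdb => simpa [Term.realize] using h p.1 p.2 hdb
    · simp

/-! ### The quantifier-free diagram -/

section Diagram

variable {K : Type (max u v)} [L.Structure K]

/-- The quantifier-free diagram of `K` in `L[[K]]`. -/
def qfDiag (K : Type (max u v)) [L.Structure K] : L[[K]].Theory :=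
  { σ | ∃ (q : ℕ) (χ : L.Formula (Fin q)) (d : Fin q → K),
      χ.IsQF ∧ χ.Realize d ∧ σ = Formula.equivSentence (χ.relabel d) }

lemma realize_diagSent {W : Type (max u v)} [L.Structure W] [L[[K]].Structure W]
    [(L.lhomWithConstants K).IsExpansionOn W] {β : Type*} (χ : L.Formula β) (d : β → K) :
    W ⊨ Formula.equivSentence (χ.relabel d) ↔
      χ.Realize (fun i => ((L.con (d i) : L[[K]].Constants) : W)) := by
  rw [Formula.realize_equivSentence, Formula.realize_relabel]
  exact Iff.rfl

lemma isQF_formula_relabel {α β : Type*} {φ : L.Formula α} (h : φ.IsQF) (g : α → β) :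
    (φ.relabel g).IsQF :=
  h.relabel _

lemma combineDiag (F : Finset (L[[K]].Sentence)) (hF : ↑F ⊆ qfDiag (L := L) K) :
    ∃ (q : ℕ) (χ : L.Formula (Fin q)) (d : Fin q → K), χ.IsQF ∧ χ.Realize d ∧
      ∀ (W : Type (max u v)) [L.Structure W] [L[[K]].Structure W]
        [(L.lhomWithConstants K).IsExpansionOn W],
        χ.Realize (fun i => ((L.con (d i) : L[[K]].Constants) : W)) → ∀ s ∈ F, W ⊨ s := by
  classical
  induction F using Finset.induction_on with
  | empty =>
    exact ⟨0, ⊤, finZeroElim, IsQF.top, Formula.realize_top.2 trivial,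
      fun W _ _ _ _ s hs => absurd hs (by simp)⟩
  | @insert a F ha ih =>
    obtain ⟨q₁, χ₁, d₁, hqf₁, hr₁, rfl⟩ := hF (Finset.mem_coe.2 (Finset.mem_insert_self a F))
    obtain ⟨q₂, χ₂, d₂, hqf₂, hr₂, hsem₂⟩ :=
      ih (fun s hs => hF (Finset.mem_coe.2 (Finset.mem_insert_of_mem (Finset.mem_coe.1 hs))))
    refine ⟨q₁ + q₂, (χ₁.relabel (Fin.castAdd q₂)) ⊓ (χ₂.relabel (Fin.natAdd q₁)),
      Fin.append d₁ d₂, (isQF_formula_relabel hqf₁ _).inf (isQF_formula_relabel hqf₂ _),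
      ?_, ?_⟩
    · rw [Formula.realize_inf, Formula.realize_relabel, Formula.realize_relabel,
        show Fin.append d₁ d₂ ∘ Fin.castAdd q₂ = d₁ from funext fun i => by simp,
        show Fin.append d₁ d₂ ∘ Fin.natAdd q₁ = d₂ from funext fun i => by simp]
      exact ⟨hr₁, hr₂⟩
    · intro W _ _ _ hreal s hs
      have h1 := (Formula.realize_inf.1 hreal).1
      have h2 := (Formula.realize_inf.1 hreal).2
      rw [Formula.realize_relabel] at h1 h2
      rcases Finset.mem_insert.1 hs with rfl | hs'
      · refine (realize_diagSent χ₁ d₁).2 ?_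
        rw [show (fun i : Fin q₁ => ((L.con (d₁ i) : L[[K]].Constants) : W)) =
            (fun i : Fin q₁ =>
              ((L.con (Fin.append d₁ d₂ (Fin.castAdd q₂ i)) : L[[K]].Constants) : W)) from
          funext fun i => by simp]
        exact h1
      · refine hsem₂ W ?_ s hs'
        rw [show (fun i : Fin q₂ => ((L.con (d₂ i) : L[[K]].Constants) : W)) =
            (fun i : Fin q₂ =>
              ((L.con (Fin.append d₁ d₂ (Fin.natAdd q₁ i)) : L[[K]].Constants) : W)) from
          funext fun i => by simp]
        exact h2

lemma exists_embedding (S : L.Theory) (K : Type (max u v)) [L.Structure K] [Nonempty K]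
    {α : Type*} (ψ : L.Formula α) (b : α → K)
    (H : ∀ (q : ℕ) (χ : L.Formula (Fin q)), χ.IsQF → ∀ d : Fin q → K, χ.Realize d →
      ∃ (W : Type (max u v)) (_ : L.Structure W) (_ : Nonempty W), W ⊨ S ∧
        ∃ co : K → W, χ.Realize (co ∘ d) ∧ ψ.Realize (co ∘ b)) :
    ∃ (W : Type (max u v)) (_ : L.Structure W) (_ : Nonempty W), W ⊨ S ∧
      ∃ g : K ↪[L] W, ψ.Realize ((g : K → W) ∘ b) := by
  classical
  set D : L[[K]].Theory := (L.lhomWithConstants K).onTheory S ∪ qfDiag (L := L) K ∪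
    {Formula.equivSentence (ψ.relabel b)} with hD
  have hsat : D.IsSatisfiable := by
    rw [Theory.isSatisfiable_iff_isFinitelySatisfiable]
    intro T0 hT0
    obtain ⟨q, χ, d, hqf, hrd, hsem⟩ := combineDiag (T0.filter (· ∈ qfDiag (L := L) K))
      (fun s hs => (Finset.mem_filter.1 (Finset.mem_coe.1 hs)).2)
    obtain ⟨W, SW, neW, hWS, co, hco1, hco2⟩ := H q χ hqf d hrd
    letI : (constantsOn K).Structure W := constantsOn.structure co
    letI : L[[K]].Structure W := L.withConstantsStructure K
    haveI : (L.lhomWithConstants K).IsExpansionOn W := L.withConstants_expansion K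
    have hcon : ∀ a : K, ((L.con a : L[[K]].Constants) : W) = co a := fun _ => rfl
    haveI hmodel : W ⊨ (T0 : L[[K]].Theory) := by
      refine (Theory.model_iff _).2 fun σ hσ => ?_
      rcases hT0 hσ with (h | h) | h
      · haveI : W ⊨ (L.lhomWithConstants K).onTheory S := (LHom.onTheory_model _ _).2 hWS
        exact Theory.realize_sentence_of_mem _ h
      · refine hsem W ?_ σ (Finset.mem_filter.2 ⟨hσ, h⟩)
        rw [show (fun i => ((L.con (d i) : L[[K]].Constants) : W)) = co ∘ d from
          funext fun i => hcon (d i)]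
        exact hco1
      · rw [Set.mem_singleton_iff.1 h]
        refine (realize_diagSent ψ b).2 ?_
        rw [show (fun i => ((L.con (b i) : L[[K]].Constants) : W)) = co ∘ b from
          funext fun i => hcon (b i)]
        exact hco2
    exact ⟨Theory.ModelType.of _ W⟩
  obtain ⟨Wm⟩ := hsat
  letI SL : L.Structure Wm := (L.lhomWithConstants K).reduct Wm
  haveI hexp : (L.lhomWithConstants K).IsExpansionOn (Wm : Type (max u v)) :=
    LHom.isExpansionOn_reduct _ _
  have hmodD : (Wm : Type (max u v)) ⊨ D := Wm.is_model
  haveI := hmodD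
  have hmodS : (Wm : Type (max u v)) ⊨ S := by
    haveI : (Wm : Type (max u v)) ⊨ (L.lhomWithConstants K).onTheory S :=
      hmodD.mono (fun x hx => Or.inl (Or.inl hx))
    exact (LHom.onTheory_model _ _).1 this
  set gfun : K → Wm := fun a => ((L.con a : L[[K]].Constants) : Wm) with hgfun
  have hkey : ∀ (q : ℕ) (χ : L.Formula (Fin q)) (d : Fin q → K), χ.IsQF → χ.Realize d →
      χ.Realize (fun i => gfun (d i)) := by
    intro q χ d hqf hrd
    refine (realize_diagSent χ d).1 ?_
    exact Theory.realize_sentence_of_mem D (Or.inl (Or.inr ⟨q, χ, d, hqf, hrd, rfl⟩))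
  have hinj : Function.Injective gfun := by
    intro a b' hab
    by_contra hne
    have hq : ((Term.equal (Term.var (0 : Fin 2)) (Term.var (1 : Fin 2))).not :
        L.Formula (Fin 2)).IsQF := (IsAtomic.equal _ _).isQF.not
    have hr : ((Term.equal (Term.var (0 : Fin 2)) (Term.var (1 : Fin 2))).not :
        L.Formula (Fin 2)).Realize ![a, b'] := by
      rw [Formula.realize_not, Formula.realize_equal]
      simpa using hne
    have := hkey 2 _ ![a, b'] hq hr
    rw [Formula.realize_not, Formula.realize_equal] at this
    exact this (by simpa using hab)
  have hfun : ∀ {m : ℕ} (f : L.Functions m) (x : Fin m → K),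
      gfun (Structure.funMap f x) = Structure.funMap f (gfun ∘ x) := by
    intro m f x
    have hq : ((Term.equal ((Term.func f (fun i => Term.var i.castSucc)) : L.Term (Fin (m+1)))
        (Term.var (Fin.last m)))).IsQF := (IsAtomic.equal _ _).isQF
    have hr : ((Term.equal ((Term.func f (fun i => Term.var i.castSucc)) : L.Term (Fin (m+1)))
        (Term.var (Fin.last m)))).Realize (Fin.snoc x (Structure.funMap f x)) := by
      rw [Formula.realize_equal]
      simp [Term.realize, Fin.snoc_castSucc, Fin.snoc_last]
    have := hkey (m+1) _ _ hq hr
    rw [Formula.realize_equal] at this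
    simp only [Term.realize, Fin.snoc_castSucc, Fin.snoc_last] at this
    exact this.symm
  have hrel : ∀ {m : ℕ} (R : L.Relations m) (x : Fin m → K),
      (Structure.RelMap R (gfun ∘ x) ↔ Structure.RelMap R x) := by
    intro m R x
    by_cases hR : Structure.RelMap R x
    · have hq : ((Relations.formula R (fun i => Term.var i)) : L.Formula (Fin m)).IsQF :=
        (IsAtomic.rel _ _).isQF
      have hr : ((Relations.formula R (fun i => Term.var i)) : L.Formula (Fin m)).Realize x := by
        rw [Formula.realize_rel]; simpa using hR
      have := hkey m _ x hq hr
      rw [Formula.realize_rel] at this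
      simp only [Term.realize] at this
      constructor
      · intro _; exact hR
      · intro _; exact this
    · have hq : ((Relations.formula R (fun i => Term.var i)).not : L.Formula (Fin m)).IsQF :=
        (IsAtomic.rel _ _).isQF.not
      have hr : ((Relations.formula R (fun i => Term.var i)).not : L.Formula (Fin m)).Realize x := by
        rw [Formula.realize_not, Formula.realize_rel]; simpa using hR
      have := hkey m _ x hq hr
      rw [Formula.realize_not, Formula.realize_rel] at this
      simp only [Term.realize] at this
      constructor
      · intro hc; exact absurd hc this
      · intro hc; exact absurd hc hR
  refine ⟨Wm, SL, inferInstance, hmodS, ⟨⟨gfun, hinj⟩, hfun, hrel⟩, ?_⟩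
  have hψ : (Wm : Type (max u v)) ⊨ Formula.equivSentence (ψ.relabel b) :=
    Theory.realize_sentence_of_mem D (Or.inr rfl)
  exact (realize_diagSent ψ b).1 hψ

/-! ### The core dichotomy -/

lemma core_dichotomy (S : L.Theory) (K : Type (max u v)) [L.Structure K] [Nonempty K]
    {α : Type*} [Fintype α] (ψ : L.Formula α) (b : α → K)
    {q : ℕ} (χ : L.Formula (Fin q)) (hqf : χ.IsQF) (d : Fin q → K) (hrd : χ.Realize d) :
    (∃ (W : Type (max u v)) (_ : L.Structure W) (_ : Nonempty W), W ⊨ S ∧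
        ∃ co : K → W, χ.Realize (co ∘ d) ∧ ψ.Realize (co ∘ b)) ∨
      ∃ θ : L.Formula α, IsUniversalFormula θ ∧ ¬ θ.Realize b ∧
        ∀ (W : Type (max u v)) [L.Structure W] [Nonempty W], W ⊨ S →
          ∀ vv : α → W, ψ.Realize vv → θ.Realize vv := by
  classical
  by_cases hcase : ∃ (W : Type (max u v)) (_ : L.Structure W) (_ : Nonempty W), W ⊨ S ∧
      ∃ co : K → W, χ.Realize (co ∘ d) ∧ ψ.Realize (co ∘ b)
  · exact Or.inl hcase
  right
  set db : α ⊕ Fin q → K := Sum.elim b d with hdb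
  set BIG : L.BoundedFormula α q :=
    (BoundedFormula.relabel (Sum.inr : Fin q → α ⊕ Fin q) χ) ⊓ eqBF db with hBIG
  refine ⟨BIG.not.alls, ⟨q, BIG.not, ((hqf.relabel _).inf (eqBF_isQF db)).not, rfl⟩, ?_, ?_⟩
  · intro hθ
    rw [realize_alls] at hθ
    have hcontra := hθ d
    rw [BoundedFormula.realize_not] at hcontra
    apply hcontra
    rw [hBIG, realize_inf]
    refine ⟨(realize_relabel_inr' χ).2 hrd, ?_⟩
    rw [realize_eqBF]
    intro p₁ p₂ hp
    cases p₁ <;> cases p₂ <;> simpa [hdb] using hp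
  · intro W _ _ hWS vv hψ
    rw [realize_alls]
    intro xs
    rw [BoundedFormula.realize_not]
    intro hBIGr
    apply hcase
    rw [hBIG, realize_inf] at hBIGr
    obtain ⟨h1, h2⟩ := hBIGr
    rw [realize_relabel_inr'] at h1
    rw [realize_eqBF] at h2
    refine ⟨W, inferInstance, inferInstance, hWS, ?_⟩
    set co : K → W := fun z =>
      if h : ∃ j, d j = z then xs h.choose
      else if h' : ∃ i, b i = z then vv h'.choose
      else Classical.arbitrary W with hco
    have hcod : ∀ j, co (d j) = xs j := by
      intro j
      have hex : ∃ j', d j' = d j := ⟨j, rfl⟩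
      have h0 : co (d j) = xs hex.choose := by simp only [hco]; rw [dif_pos hex]
      rw [h0]
      have := h2 (Sum.inr hex.choose) (Sum.inr j) (by simp [hdb, hex.choose_spec])
      simpa using this
    have hcob : ∀ i, co (b i) = vv i := by
      intro i
      by_cases hex : ∃ j, d j = b i
      · have h0 : co (b i) = xs hex.choose := by simp only [hco]; rw [dif_pos hex]
        rw [h0]
        have := h2 (Sum.inr hex.choose) (Sum.inl i) (by simp [hdb, hex.choose_spec])
        simpa using this
      · have hex2 : ∃ i', b i' = b i := ⟨i, rfl⟩
        have h0 : co (b i) = vv hex2.choose := by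
          simp only [hco]
          rw [dif_neg hex, dif_pos hex2]
        rw [h0]
        have := h2 (Sum.inl hex2.choose) (Sum.inl i) (by simp [hdb, hex2.choose_spec])
        simpa using this
    exact ⟨co, by rw [show co ∘ d = xs from funext hcod]; exact h1,
      by rw [show co ∘ b = vv from funext hcob]; exact hψ⟩

/-! ### Embedding into a model of `S` from a model of the universal part -/

lemma embed_into_model (S : L.Theory) (K : Type (max u v)) [L.Structure K] [Nonempty K]
    (hK : K ⊨ universalPart S) :
    ∃ (W : Type (max u v)) (_ : L.Structure W) (_ : Nonempty W), W ⊨ S ∧ Nonempty (K ↪[L] W) := by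
  haveI := hK
  obtain ⟨W, SW, neW, hWS, g, -⟩ := exists_embedding S K (⊤ : L.Formula Empty)
    (default : Empty → K) (fun q χ hqf d hrd => by
      rcases core_dichotomy S K (⊤ : L.Formula Empty) (default : Empty → K) χ hqf d hrd with
        h | ⟨θ, hu, hnb, hcons⟩
      · exact h
      · exfalso
        apply hnb
        have hmem : θ ∈ universalPart S := by
          refine ⟨hu, Theory.models_sentence_iff.2 fun Mt => ?_⟩
          exact hcons Mt Mt.is_model default (Formula.realize_top.2 trivial)
        have hKθ : K ⊨ θ := Theory.realize_sentence_of_mem (M := K) (universalPart S) hmem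
        exact hKθ)
  exact ⟨W, SW, neW, hWS, ⟨g⟩⟩

end Diagram

/-! ### Model complete theories: universal and existential equivalents -/

lemma univ_combine {α : Type*} {θ₁ θ₂ : L.Formula α} (h₁ : IsUniversalFormula θ₁)
    (h₂ : IsUniversalFormula θ₂) :
    ∃ θ : L.Formula α, IsUniversalFormula θ ∧
      ∀ (W : Type (max u v)) [L.Structure W] [Nonempty W] (val : α → W),
        (θ.Realize val ↔ θ₁.Realize val ∧ θ₂.Realize val) := by
  obtain ⟨n₁, χ₁, hq1, rfl⟩ := h₁
  obtain ⟨n₂, χ₂, hq2, rfl⟩ := h₂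
  refine ⟨(χ₁.castLE (le_max_left n₁ n₂) ⊓ χ₂.castLE (le_max_right n₁ n₂)).alls,
    ⟨max n₁ n₂, _, hq1.castLE.inf hq2.castLE, rfl⟩, ?_⟩
  intro W _ _ val
  rw [realize_alls, realize_alls, realize_alls]
  have ext : ∀ (m : ℕ) (hm : m ≤ max n₁ n₂) (ys : Fin m → W),
      ∃ xs : Fin (max n₁ n₂) → W, xs ∘ Fin.castLE hm = ys := by
    intro m hm ys
    refine ⟨fun i => if h : (i : ℕ) < m then ys ⟨i, h⟩ else Classical.arbitrary W, ?_⟩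
    funext i
    have hi : ((Fin.castLE hm i : Fin (max n₁ n₂)) : ℕ) < m := by simpa using i.isLt
    simp only [Function.comp_apply, dif_pos hi]
    exact congrArg ys (Fin.ext rfl)
  constructor
  · intro h
    constructor
    · intro ys
      obtain ⟨xs, hxs⟩ := ext n₁ (le_max_left _ _) ys
      have := (realize_inf.1 (h xs)).1
      rwa [isQF_realize_castLE _ hq1, hxs] at this
    · intro ys
      obtain ⟨xs, hxs⟩ := ext n₂ (le_max_right _ _) ys
      have := (realize_inf.1 (h xs)).2
      rwa [isQF_realize_castLE _ hq2, hxs] at this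
  · rintro ⟨ha, hb⟩ xs
    rw [realize_inf, isQF_realize_castLE _ hq1, isQF_realize_castLE _ hq2]
    exact ⟨ha _, hb _⟩

lemma univ_combine_finite {α : Type*} (V : Set (L.Formula α)) (hfin : V.Finite)
    (hall : ∀ θ ∈ V, IsUniversalFormula θ) :
    ∃ θ : L.Formula α, IsUniversalFormula θ ∧
      ∀ (W : Type (max u v)) [L.Structure W] [Nonempty W] (val : α → W),
        (θ.Realize val ↔ ∀ θ' ∈ V, θ'.Realize val) := by
  classical
  obtain ⟨F, rfl⟩ : ∃ F : Finset (L.Formula α), ↑F = V := ⟨hfin.toFinset, hfin.coe_toFinset⟩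
  clear hfin
  induction F using Finset.induction_on with
  | empty =>
    refine ⟨(⊥ : L.BoundedFormula α 0).not.alls, ⟨0, _, isQF_bot.not, rfl⟩,
      fun W _ _ val => ?_⟩
    simp [realize_alls]
  | @insert a F ha ih =>
    obtain ⟨θ₂, hu₂, hiff₂⟩ := ih (fun θ hθ =>
      hall θ (Finset.mem_coe.2 (Finset.mem_insert_of_mem (Finset.mem_coe.1 hθ))))
    obtain ⟨θ, hu, hiff⟩ := univ_combine (hall a (by simp)) hu₂
    refine ⟨θ, hu, fun W _ _ val => ?_⟩
    rw [hiff W val, hiff₂ W val]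
    constructor
    · rintro ⟨hc1, hc2⟩ θ' hθ'
      rcases Finset.mem_insert.1 (Finset.mem_coe.1 hθ') with rfl | hh
      · exact hc1
      · exact hc2 θ' (Finset.mem_coe.2 hh)
    · intro h
      exact ⟨h a (by simp), fun θ' hθ' => h θ' (by
        exact Finset.mem_coe.2 (Finset.mem_insert_of_mem (Finset.mem_coe.1 hθ')))⟩

lemma stepA (Tstar : L.Theory) (hMC : IsModelComplete Tstar) {r : ℕ} (ψ : L.Formula (Fin r))
    (K : Type (max u v)) [L.Structure K] [Nonempty K] (hK : K ⊨ Tstar) (b : Fin r → K)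
    (hU : ∀ θ : L.Formula (Fin r), IsUniversalFormula θ →
      (∀ (W : Type (max u v)) [L.Structure W] [Nonempty W], W ⊨ Tstar →
        ∀ vv : Fin r → W, ψ.Realize vv → θ.Realize vv) → θ.Realize b) :
    ψ.Realize b := by
  obtain ⟨W, SW, neW, hWS, g, hg⟩ := exists_embedding Tstar K ψ b (fun q χ hqf d hrd => by
    rcases core_dichotomy Tstar K ψ b χ hqf d hrd with h | ⟨θ, h1, h2, h3⟩
    · exact h
    · exact absurd (hU θ h1 h3) h2)
  exact (hMC K W hK hWS g r ψ b).1 hg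

lemma exists_universal_equiv (Tstar : L.Theory) (hMC : IsModelComplete Tstar) {r : ℕ}
    (ψ : L.Formula (Fin r)) :
    ∃ θ : L.Formula (Fin r), IsUniversalFormula θ ∧
      ∀ (K : Type (max u v)) [L.Structure K] [Nonempty K], K ⊨ Tstar →
        ∀ b : Fin r → K, (ψ.Realize b ↔ θ.Realize b) := by
  classical
  set U : Set (L.Formula (Fin r)) := {θ | IsUniversalFormula θ ∧
    ∀ (W : Type (max u v)) [L.Structure W] [Nonempty W], W ⊨ Tstar →
      ∀ vv : Fin r → W, ψ.Realize vv → θ.Realize vv} with hUdef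
  set D : L[[Fin r]].Theory := (L.lhomWithConstants (Fin r)).onTheory Tstar ∪
    (Formula.equivSentence '' U) ∪ {Formula.equivSentence ψ.not} with hD
  have hunsat : ¬ D.IsSatisfiable := by
    rintro ⟨Wm⟩
    letI SL : L.Structure Wm := (L.lhomWithConstants (Fin r)).reduct Wm
    haveI : (L.lhomWithConstants (Fin r)).IsExpansionOn (Wm : Type (max u v)) :=
      LHom.isExpansionOn_reduct _ _
    have hmodD : (Wm : Type (max u v)) ⊨ D := Wm.is_model
    haveI := hmodD
    have hstar : (Wm : Type (max u v)) ⊨ Tstar := by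
      haveI : (Wm : Type (max u v)) ⊨ (L.lhomWithConstants (Fin r)).onTheory Tstar :=
        hmodD.mono fun x hx => Or.inl (Or.inl hx)
      exact (LHom.onTheory_model _ _).1 this
    set bb : Fin r → Wm := fun i => ((L.con i : L[[Fin r]].Constants) : Wm) with hbb
    have hψb : ψ.Realize bb := by
      apply stepA Tstar hMC ψ Wm hstar bb
      intro θ hθu hθcons
      have hmem : Formula.equivSentence θ ∈ D := Or.inl (Or.inr ⟨θ, ⟨hθu, hθcons⟩, rfl⟩)
      have := Theory.realize_sentence_of_mem (M := (Wm : Type (max u v))) D hmem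
      rwa [Formula.realize_equivSentence] at this
    have hnψb : ¬ ψ.Realize bb := by
      have := Theory.realize_sentence_of_mem (M := (Wm : Type (max u v))) D
        (Or.inr rfl : Formula.equivSentence ψ.not ∈ D)
      rwa [Formula.realize_equivSentence, Formula.realize_not] at this
    exact hnψb hψb
  rw [Theory.isSatisfiable_iff_isFinitelySatisfiable] at hunsat
  simp only [Theory.IsFinitelySatisfiable, not_forall] at hunsat
  obtain ⟨T0, hT0sub, hT0unsat⟩ := hunsat
  set V : Set (L.Formula (Fin r)) := {θ | θ ∈ U ∧ Formula.equivSentence θ ∈ T0} with hV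
  have hVfin : V.Finite := by
    have hsub : V ⊆ Formula.equivSentence ⁻¹' (T0 : Set (L[[Fin r]].Sentence)) :=
      fun θ hθ => hθ.2
    exact (Set.Finite.preimage (Equiv.injective _).injOn T0.finite_toSet).subset hsub
  obtain ⟨θc, hθcu, hθciff⟩ := univ_combine_finite V hVfin (fun θ hθ => hθ.1.1)
  refine ⟨θc, hθcu, ?_⟩
  intro K _ _ hK b
  constructor
  · intro hψb
    exact (hθciff K b).2 fun θ' hθ' => hθ'.1.2 K hK b hψb
  · intro hθb
    by_contra hnψ
    letI : (constantsOn (Fin r)).Structure K := constantsOn.structure b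
    letI : L[[Fin r]].Structure K := L.withConstantsStructure (Fin r)
    haveI : (L.lhomWithConstants (Fin r)).IsExpansionOn K := L.withConstants_expansion (Fin r)
    haveI hmod : K ⊨ (T0 : L[[Fin r]].Theory) := by
      refine (Theory.model_iff _).2 fun σ hσ => ?_
      rcases hT0sub hσ with (h | h) | h
      · haveI : K ⊨ (L.lhomWithConstants (Fin r)).onTheory Tstar :=
          (LHom.onTheory_model _ _).2 hK
        exact Theory.realize_sentence_of_mem _ h
      · obtain ⟨θ', hθ'U, rfl⟩ := h
        rw [Formula.realize_equivSentence]
        exact (hθciff K b).1 hθb θ' ⟨hθ'U, hσ⟩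
      · rw [Set.mem_singleton_iff.1 h]
        rw [Formula.realize_equivSentence, Formula.realize_not]
        exact hnψ
    exact hT0unsat ⟨Theory.ModelType.of _ K⟩

lemma exists_existential_equiv (Tstar : L.Theory) (hMC : IsModelComplete Tstar) {r : ℕ}
    (ψ : L.Formula (Fin r)) :
    ∃ ε : L.Formula (Fin r), IsExistentialFormula ε ∧
      ∀ (K : Type (max u v)) [L.Structure K] [Nonempty K], K ⊨ Tstar →
        ∀ b : Fin r → K, (ψ.Realize b ↔ ε.Realize b) := by
  obtain ⟨θ, ⟨n, χ, hqf, rfl⟩, hiff⟩ := exists_universal_equiv Tstar hMC ψ.not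
  refine ⟨χ.not.exs, ⟨n, χ.not, hqf.not, rfl⟩, ?_⟩
  intro K _ _ hK b
  have h := hiff K hK b
  rw [Formula.realize_not, realize_alls] at h
  rw [realize_exs]
  constructor
  · intro hψ
    by_contra hc
    push_neg at hc
    refine (h.2 (fun xs => ?_)) hψ
    have := hc xs
    rwa [BoundedFormula.realize_not, not_not] at this
  · rintro ⟨xs, hxs⟩
    rw [BoundedFormula.realize_not] at hxs
    by_contra hnψ
    exact hxs (h.1 hnψ xs)

lemma ex_pull {n : ℕ} {ε : L.Formula (Fin (n + 1))} (h : IsExistentialFormula ε) :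
    ∃ ε' : L.Formula (Fin n), IsExistentialFormula ε' ∧
      ∀ (W : Type (max u v)) [L.Structure W] (val : Fin n → W),
        (ε'.Realize val ↔ ∃ c : W, ε.Realize (Fin.snoc val c)) := by
  obtain ⟨m, χ, hqf, rfl⟩ := h
  set g : Fin (n + 1) → (Fin n) ⊕ Fin 1 :=
    fun i => Fin.lastCases (Sum.inr 0) (fun j => Sum.inl j) i with hg
  refine ⟨(χ.relabel g).exs, ⟨1 + m, χ.relabel g, hqf.relabel g, rfl⟩, ?_⟩
  intro W _ val
  rw [realize_exs]
  constructor
  · rintro ⟨xs, hxs⟩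
    rw [BoundedFormula.realize_relabel] at hxs
    refine ⟨xs (Fin.castAdd m 0), ?_⟩
    rw [realize_exs]
    refine ⟨xs ∘ Fin.natAdd 1, ?_⟩
    have e : Sum.elim val (xs ∘ Fin.castAdd m) ∘ g = Fin.snoc val (xs (Fin.castAdd m 0)) := by
      funext i
      refine Fin.lastCases ?_ (fun j => ?_) i
      · simp [hg]
      · simp [hg]
    rwa [e] at hxs
  · rintro ⟨c, hc⟩
    rw [realize_exs] at hc
    obtain ⟨ys, hys⟩ := hc
    refine ⟨Fin.append (fun _ : Fin 1 => c) ys, ?_⟩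
    rw [BoundedFormula.realize_relabel]
    have e1 : Fin.append (fun _ : Fin 1 => c) ys ∘ Fin.natAdd 1 = ys := funext fun i => by simp
    have e2 : Sum.elim val ((Fin.append (fun _ : Fin 1 => c) ys) ∘ Fin.castAdd m) ∘ g =
        Fin.snoc val c := by
      funext i
      refine Fin.lastCases ?_ (fun j => ?_) i
      · simp [hg]
      · simp [hg]
    rw [e1, e2]
    exact hys

/-! ### Existentially closed embeddings into models of a model complete theory are elementary -/

lemma ec_embedding_elementary (Tstar : L.Theory) (hMC : IsModelComplete Tstar)
    {M P : Type (max u v)} [L.Structure M] [L.Structure P] [Nonempty M] [Nonempty P]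
    (hP : P ⊨ Tstar) (e : M ↪[L] P) (hec : IsECVia e) :
    ∀ {n : ℕ} (φ : L.BoundedFormula Empty n) (xs : Fin n → M),
      (φ.Realize default xs ↔ φ.Realize default ((e : M → P) ∘ xs)) := by
  intro n φ
  induction φ with
  | falsum => intro xs; exact Iff.rfl
  | equal t₁ t₂ =>
    intro xs
    have h := ((IsAtomic.equal t₁ t₂).isQF).realize_embedding e
      (v := (default : Empty → M)) (xs := xs)
    rw [show ((e : M → P) ∘ (default : Empty → M)) = (default : Empty → P) from
      Subsingleton.elim _ _] at h
    exact h.symm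
  | rel R ts =>
    intro xs
    have h := ((IsAtomic.rel R ts).isQF).realize_embedding e
      (v := (default : Empty → M)) (xs := xs)
    rw [show ((e : M → P) ∘ (default : Empty → M)) = (default : Empty → P) from
      Subsingleton.elim _ _] at h
    exact h.symm
  | imp φ₁ φ₂ ih₁ ih₂ =>
    intro xs
    simp only [BoundedFormula.realize_imp, ih₁ xs, ih₂ xs]
  | @all k φ' ih =>
    intro xs
    simp only [BoundedFormula.realize_all]
    constructor
    · intro hM
      by_contra hcon
      push_neg at hcon
      obtain ⟨c, hc⟩ := hcon
      set ψ : L.Formula (Fin (k + 1)) :=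
        Formula.relabel (Sum.elim Empty.elim id) (φ'.not.toFormula) with hψdef
      have hψ : ∀ (W : Type (max u v)) (SW : L.Structure W) (w : Fin (k + 1) → W),
          ψ.Realize w ↔ ¬ φ'.Realize default w := by
        intro W SW w
        rw [hψdef, Formula.realize_relabel, BoundedFormula.realize_toFormula,
          BoundedFormula.realize_not]
        rw [show ((w ∘ Sum.elim Empty.elim id) ∘ Sum.inl) = (default : Empty → W) from
          Subsingleton.elim _ _]
        exact Iff.rfl
      obtain ⟨ε, hεex, hεiff⟩ := exists_existential_equiv Tstar hMC ψ
      obtain ⟨ε', hex', hε'iff⟩ := ex_pull hεex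
      have h1 : ε.Realize (Fin.snoc ((e : M → P) ∘ xs) c) :=
        (hεiff P hP _).1 ((hψ P _ _).2 hc)
      have h2 : ε'.Realize ((e : M → P) ∘ xs) := (hε'iff P _).2 ⟨c, h1⟩
      have h3 : ε'.Realize xs := hec k ε' hex' xs h2
      obtain ⟨a, h4⟩ := (hε'iff M xs).1 h3
      have h5 : ε.Realize ((e : M → P) ∘ (Fin.snoc xs a)) := realize_up_of_existential hεex e h4
      rw [Fin.comp_snoc] at h5
      have h6 : ¬ φ'.Realize default (Fin.snoc ((e : M → P) ∘ xs) ((e : M → P) a)) :=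
        (hψ P _ _).1 ((hεiff P hP _).2 h5)
      apply h6
      have h7 : φ'.Realize default ((e : M → P) ∘ (Fin.snoc xs a)) := (ih _).1 (hM a)
      rwa [Fin.comp_snoc] at h7
    · intro hPside a
      have := hPside ((e : M → P) a)
      rw [← Fin.comp_snoc] at this
      exact (ih _).2 this

end ModelCompanionAux

/-- The models of a model companion of `T` are exactly the existentially closed
models of `T_∀`. -/
theorem modelCompanion_models_iff_ec (T Tstar : L.Theory)
    (h : IsModelCompanion T Tstar) :
    ∀ (M : Type (max u v)) [L.Structure M] [Nonempty M],
      M ⊨ Tstar ↔ IsECFor (universalPart T) M := by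
  classical
  obtain ⟨hMC, hTtoStar, hStarToT⟩ := h
  intro M _ _
  constructor
  · intro hM
    obtain ⟨N, SN, neN, hNT, ⟨f⟩⟩ := hStarToT M hM
    have hMuniv : M ⊨ universalPart T := ModelCompanionAux.model_universalPart_of_embedding f hNT
    refine ⟨hMuniv, ?_⟩
    intro N' _ _ hN' f' k φ hex x hx
    obtain ⟨W, SW, neW, hWT, ⟨g⟩⟩ := ModelCompanionAux.embed_into_model T N' hN'
    obtain ⟨Pp, SP, neP, hPT, ⟨hEmb⟩⟩ := hTtoStar W hWT
    have hx1 : φ.Realize ((g : N' → W) ∘ ((f' : M → N') ∘ x)) :=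
      ModelCompanionAux.realize_up_of_existential hex g hx
    have hx2 : φ.Realize ((hEmb : W → Pp) ∘ ((g : N' → W) ∘ ((f' : M → N') ∘ x))) :=
      ModelCompanionAux.realize_up_of_existential hex hEmb hx1
    have hcomp : ((((hEmb.comp g).comp f') : M ↪[L] Pp) : M → Pp) ∘ x =
        (hEmb : W → Pp) ∘ ((g : N' → W) ∘ ((f' : M → N') ∘ x)) := by
      funext i; simp [Embedding.comp_apply]
    have hiff := hMC M Pp hM hPT ((hEmb.comp g).comp f') k φ x
    rw [hcomp] at hiff
    exact hiff.1 hx2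
  · rintro ⟨hMuniv, hec⟩
    obtain ⟨W, SW, neW, hWT, ⟨g⟩⟩ := ModelCompanionAux.embed_into_model T M hMuniv
    obtain ⟨Pp, SP, neP, hPstar, ⟨hEmb⟩⟩ := hTtoStar W hWT
    obtain ⟨Q, SQ, neQ, hQT, ⟨j⟩⟩ := hStarToT Pp hPstar
    have hPuniv : Pp ⊨ universalPart T := ModelCompanionAux.model_universalPart_of_embedding j hQT
    have hecE : IsECVia (hEmb.comp g) := hec Pp hPuniv (hEmb.comp g)
    refine (Theory.model_iff _).2 fun σ hσ => ?_
    have hPσ : Pp ⊨ σ := by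
      haveI := hPstar
      exact Theory.realize_sentence_of_mem Tstar hσ
    have hfin := ModelCompanionAux.ec_embedding_elementary Tstar hMC hPstar (hEmb.comp g) hecE
      (n := 0) σ default
    rw [show (((hEmb.comp g : M ↪[L] Pp) : M → Pp) ∘ (default : Fin 0 → M)) =
      (default : Fin 0 → Pp) from Subsingleton.elim _ _] at hfin
    exact hfin.2 hPσ
end

section
/- The model companion of a theory depends only on its universal part: if T* is a model companion of a first-order theory T, and S is a first-order theory in the same language with the same universal consequences as T (S_∀ = T_∀), then T* is a model companion of S. -/
open FirstOrder FirstOrder.Language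

universe u v

variable {L : FirstOrder.Language.{u, v}}

section Aux

open FirstOrder.Language.BoundedFormula FirstOrder.Language.Structure

/-- Finite conjunctions of quantifier-free formulas are quantifier-free. -/
lemma isQF_foldr_inf {α : Type*} {n : ℕ} (l : List (L.BoundedFormula α n))
    (h : ∀ φ ∈ l, BoundedFormula.IsQF φ) : BoundedFormula.IsQF (l.foldr (· ⊓ ·) ⊤) := by
  induction l with
  | nil => exact BoundedFormula.IsQF.top
  | cons a l ih =>
    exact (h a List.mem_cons_self).inf (ih fun φ hφ => h φ (List.mem_cons_of_mem _ hφ))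

/-- `mapTermRel` preserves quantifier-free formulas. -/
lemma IsQF_mapTermRel {L' : Language} {α β : Type*} {n : ℕ}
    {ft : ∀ n, L.Term (α ⊕ Fin n) → L'.Term (β ⊕ Fin n)}
    {fr : ∀ n, L.Relations n → L'.Relations n}
    {h : ∀ n, L'.BoundedFormula β (n + 1) → L'.BoundedFormula β (n + 1)}
    {φ : L.BoundedFormula α n} (hφ : φ.IsQF) :
    (φ.mapTermRel ft fr h).IsQF := by
  induction hφ with
  | falsum => exact BoundedFormula.isQF_bot
  | of_isAtomic ha =>
    cases ha with
    | equal t₁ t₂ => exact (BoundedFormula.IsAtomic.equal _ _).isQF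
    | rel R ts => exact (BoundedFormula.IsAtomic.rel _ _).isQF
  | imp _ _ ih₁ ih₂ => exact ih₁.imp ih₂

/-- `restrictFreeVar` preserves quantifier-free formulas. -/
lemma IsQF_restrictFreeVar {α β : Type*} [DecidableEq α] {n : ℕ}
    {φ : L.BoundedFormula α n} (hφ : φ.IsQF) (f : φ.freeVarFinset → β) :
    (φ.restrictFreeVar f).IsQF := by
  induction hφ with
  | falsum => exact BoundedFormula.isQF_bot
  | of_isAtomic ha =>
    cases ha with
    | equal t₁ t₂ => exact (BoundedFormula.IsAtomic.equal _ _).isQF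
    | rel R ts => exact (BoundedFormula.IsAtomic.rel _ _).isQF
  | imp _ _ ih₁ ih₂ => exact (ih₁ _).imp (ih₂ _)

/-- If a structure models a theory, it models its universal part. -/
lemma models_universalPart_of_models {T : L.Theory} {M : Type (max u v)} [L.Structure M]
    [Nonempty M] (h : M ⊨ T) : M ⊨ universalPart T := by
  haveI := h
  rw [Theory.model_iff]
  exact fun φ hφ => hφ.2.realize_sentence M

/-- The key compactness lemma: any structure modeling the universal part of `T` embeds
into a model of `T`.  This is proved by showing that the union of (the translation of) `T`
and the quantifier-free diagram of `M` (in the language with constants for `M`) is finitely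
satisfiable. -/
lemma exists_embedding_of_models_universalPart (T : L.Theory)
    (M : Type (max u v)) [L.Structure M] [Nonempty M] (hM : M ⊨ universalPart T) :
    ∃ (N : Type (max u v)) (_ : L.Structure N) (_ : Nonempty N),
      N ⊨ T ∧ Nonempty (M ↪[L] N) := by
  classical
  -- the quantifier-free diagram of `M`
  let D : L[[M]].Theory := {φ | BoundedFormula.IsQF φ ∧ M ⊨ φ}
  have hDQF : ∀ φ ∈ D, BoundedFormula.IsQF φ := fun φ hφ => hφ.1
  have hDM : ∀ φ ∈ D, M ⊨ φ := fun φ hφ => hφ.2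
  have hsat : ((L.lhomWithConstants M).onTheory T ∪ D).IsSatisfiable := by
    rw [Theory.isSatisfiable_iff_isFinitelySatisfiable]
    intro T0 hT0
    -- the finitely many quantifier-free diagram sentences in `T0`
    set D0 : List (L[[M]].Sentence) := (T0.filter (fun φ => φ ∈ D)).toList with hD0def
    have hD0mem : ∀ φ ∈ D0, φ ∈ D := by
      intro φ hφ
      exact (Finset.mem_filter.1 (Finset.mem_toList.1 hφ)).2
    -- their conjunction
    set Φ : L[[M]].Sentence := D0.foldr (· ⊓ ·) ⊤ with hΦdef
    have hΦqf : BoundedFormula.IsQF Φ := isQF_foldr_inf _ (fun φ hφ => (hD0mem φ hφ).1)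
    have hΦM : M ⊨ Φ := (BoundedFormula.realize_foldr_inf D0 _ _).2 fun φ hφ => (hD0mem φ hφ).2
    -- turn the constants into (finitely many) free variables
    set θ : L.BoundedFormula (M ⊕ Empty) 0 := BoundedFormula.constantsVarsEquiv Φ with hθdef
    have hθqf : θ.IsQF := IsQF_mapTermRel hΦqf
    set s : Set (M ⊕ Empty) := ↑θ.freeVarFinset with hsdef
    have hsub : ↑θ.freeVarFinset ⊆ s := subset_rfl
    set θ' : L.BoundedFormula s 0 := θ.restrictFreeVar (Set.inclusion hsub) with hθ'def
    have hθ'qf : θ'.IsQF := IsQF_restrictFreeVar hθqf _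
    set m : ℕ := Fintype.card s with hmdef
    set e : s ≃ Fin m := Fintype.equivFin s with hedef
    set χ : L.BoundedFormula (Fin m) 0 := BoundedFormula.relabelEquiv e θ' with hχdef
    have hχqf : χ.IsQF := IsQF_mapTermRel hθ'qf
    -- realizing χ in a structure realizes θ
    have hχreal : ∀ (N : Type (max u v)) [L.Structure N], ∀ (v : Fin m → N) (xs : Fin 0 → N),
        χ.Realize v xs ↔ θ'.Realize (v ∘ e) xs := by
      intro N _ v xs
      exact BoundedFormula.realize_relabelEquiv
    -- the corresponding universal sentence
    set χ₀ : L.BoundedFormula Empty (m + 0) :=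
      BoundedFormula.relabel (fun i => (Sum.inr i : Empty ⊕ Fin m)) χ.not with hχ₀def
    have hχ₀qf : χ₀.IsQF := hχqf.not.relabel _
    -- `χ` is realized in some model of `T`
    have hex : ∃ (N : Theory.ModelType.{u, v, max u v} T) (x : Fin m → N), χ.Realize x default := by
      by_contra hcon
      push_neg at hcon
      have hσ : χ₀.alls ∈ universalPart T := by
        refine ⟨⟨m + 0, χ₀, hχ₀qf, rfl⟩, Theory.models_sentence_iff.2 fun N => ?_⟩
        rw [Sentence.Realize, BoundedFormula.realize_alls]
        intro xs
        rw [hχ₀def, BoundedFormula.realize_relabel, BoundedFormula.realize_not]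
        intro hh
        refine hcon N ((Sum.elim (default : Empty → N) (xs ∘ Fin.castAdd 0)) ∘
          fun i => Sum.inr i) ?_
        convert hh using 2 <;> exact Subsingleton.elim _ _
      have hMσ : M ⊨ χ₀.alls := hM.realize_of_mem _ hσ
      rw [Sentence.Realize, BoundedFormula.realize_alls] at hMσ
      -- instantiate at the actual elements of `M` indexed by the free variables
      set v₀ : M ⊕ Empty → M := Sum.elim id (fun x => x.elim) with hv₀def
      set x₀ : Fin m → M := fun i => v₀ ((e.symm i : s) : M ⊕ Empty) with hx₀def
      have := hMσ x₀
      rw [hχ₀def, BoundedFormula.realize_relabel, BoundedFormula.realize_not] at this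
      apply this
      have hcast : (x₀ ∘ Fin.castAdd 0) = x₀ := by
        funext i
        rfl
      rw [Sum.elim_comp_inr]
      change χ.Realize x₀ _
      rw [hχreal M x₀ _]
      have hcomp : (x₀ ∘ e : s → M) = v₀ ∘ (↑) := by
        funext y
        simp [hx₀def]
      rw [hcomp, hθ'def]
      rw [BoundedFormula.realize_restrictFreeVar' hsub]
      have hv : v₀ = Sum.elim (fun a => ((L.con a : L[[M]].Constants) : M)) (fun x => x.elim) := by
        funext y
        cases y with
        | inl a => rfl
        | inr x => exact x.elim
      rw [hθdef, hv]
      rw [BoundedFormula.realize_constantsVarsEquiv]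
      have h3 : Sentence.Realize M Φ := hΦM
      rw [Sentence.Realize, Formula.Realize] at h3
      convert h3 using 2 <;> exact Subsingleton.elim _ _
    obtain ⟨N, x, hx⟩ := hex
    -- interpret the constants of `M` in `N`
    haveI : Nonempty N := inferInstance
    set w : M ⊕ Empty → N := fun y => if h : y ∈ s then x (e ⟨y, h⟩) else Classical.arbitrary N
      with hwdef
    have hθN : θ.Realize w (default : Fin 0 → N) := by
      rw [← BoundedFormula.realize_restrictFreeVar' hsub, ← hθ'def]
      have hcomp : (w ∘ (↑) : s → N) = x ∘ e := by
        funext y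
        have hy : (y : M ⊕ Empty) ∈ s := y.2
        simp only [hwdef, Function.comp_apply, dif_pos hy]
      rw [hcomp]
      exact (hχreal N x default).1 hx
    letI : (constantsOn M).Structure N := constantsOn.structure (fun a => w (Sum.inl a))
    have hΦN : N ⊨ Φ := by
      have hv : w = Sum.elim (fun a => ((L.con a : L[[M]].Constants) : N)) (fun x => x.elim) := by
        funext y
        cases y with
        | inl a => rfl
        | inr x => exact x.elim
      rw [hv] at hθN
      rw [hθdef] at hθN
      rw [BoundedFormula.realize_constantsVarsEquiv (M := N)
        (φ := Φ) (v := fun x : Empty => x.elim) (xs := default)] at hθN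
      show BoundedFormula.Realize Φ (default : Empty → N) (default : Fin 0 → N)
      convert hθN using 2 <;> exact Subsingleton.elim _ _
    have hNT0 : N ⊨ (↑T0 : L[[M]].Theory) := by
      rw [Theory.model_iff]
      intro φ hφ
      rcases hT0 hφ with hφT | hφD
      · have hNT : N ⊨ (L.lhomWithConstants M).onTheory T :=
          (LHom.onTheory_model _ _).2 N.is_model
        exact hNT.realize_of_mem _ hφT
      · have : φ ∈ D0 := Finset.mem_toList.2 (Finset.mem_filter.2 ⟨hφ, hφD⟩)
        exact (BoundedFormula.realize_foldr_inf D0 _ _).1 hΦN φ this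
    haveI := hNT0
    exact Theory.Model.isSatisfiable N
  -- a model of the whole theory gives the desired extension
  obtain ⟨P⟩ := hsat
  letI : L.Structure P := (L.lhomWithConstants M).reduct P
  haveI : (L.lhomWithConstants M).IsExpansionOn P := LHom.isExpansionOn_reduct _ _
  have hPT : P ⊨ T :=
    (LHom.onTheory_model _ _).1 (P.is_model.mono Set.subset_union_left)
  have hPD : ∀ φ ∈ D, P ⊨ φ := fun φ hφ =>
    (P.is_model.mono Set.subset_union_right).realize_of_mem _ hφ
  -- construct the embedding from the diagram
  have hDiag : ∀ (φ : L[[M]].Sentence), BoundedFormula.IsQF φ → M ⊨ φ → P ⊨ φ :=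
    fun φ hqf hMφ => hPD φ ⟨hqf, hMφ⟩
  have inj : Function.Injective (fun a : M => ((L.con a : L[[M]].Constants) : P)) := by
    intro a b hab
    by_contra hne
    have hMs : M ⊨ (Term.equal (Constants.term (L.con a)) (Constants.term (L.con b))).not := by
      simp only [Sentence.Realize, Formula.realize_not, Formula.realize_equal,
        Term.realize_constants]
      exact hne
    have hPs := hDiag ((Term.equal (Constants.term (L.con a))
        (Constants.term (L.con b))).not) ((BoundedFormula.IsAtomic.equal _ _).isQF.not) hMs
    simp only [Sentence.Realize, Formula.realize_not, Formula.realize_equal,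
      Term.realize_constants] at hPs
    exact hPs (by simpa using hab)
  have hfun : ∀ (n : ℕ) (F : L.Functions n) (y : Fin n → M),
      ((L.con (funMap F y) : L[[M]].Constants) : P) =
        funMap F (fun i => ((L.con (y i) : L[[M]].Constants) : P)) := by
    intro n F y
    have hMs : M ⊨ Term.equal (Term.func (Sum.inl F : L[[M]].Functions n)
        (fun i => Constants.term (L.con (y i)))) (Constants.term (L.con (funMap F y))) := by
      simp only [Sentence.Realize, Formula.realize_equal, Term.realize_func,
        Term.realize_constants]
      rfl
    have hPs := hDiag (Term.equal (Term.func (Sum.inl F : L[[M]].Functions n)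
        (fun i => Constants.term (L.con (y i)))) (Constants.term (L.con (funMap F y))))
      ((BoundedFormula.IsAtomic.equal _ _).isQF) hMs
    simp only [Sentence.Realize, Formula.realize_equal, Term.realize_func,
      Term.realize_constants] at hPs
    exact hPs.symm.trans ((Term.realize_func _ _ _).trans (((L.lhomWithConstants M).map_onFunction F _).trans (congrArg (funMap F) (funext fun i => Term.realize_constants))))
  have hrel : ∀ (n : ℕ) (R : L.Relations n) (y : Fin n → M),
      RelMap R (fun i => ((L.con (y i) : L[[M]].Constants) : P)) ↔ RelMap R y := by
    intro n R y
    by_cases hMR : RelMap R y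
    · have hMs : M ⊨ Relations.formula (Sum.inl R : L[[M]].Relations n)
          (fun i => Constants.term (L.con (y i))) := by
        simp only [Sentence.Realize, Formula.realize_rel, Term.realize_constants]
        exact hMR
      have hPs := hDiag (Relations.formula (Sum.inl R : L[[M]].Relations n)
          (fun i => Constants.term (L.con (y i)))) ((BoundedFormula.IsAtomic.rel _ _).isQF) hMs
      simp only [Sentence.Realize, Formula.realize_rel, Term.realize_constants] at hPs
      exact iff_of_true (((L.lhomWithConstants M).map_onRelation R _).mp ((congrArg (fun x => RelMap (L := L[[M]]) (M := P) (Sum.inl R : L[[M]].Relations n) x) (funext fun i => Term.realize_constants)).mp (Formula.realize_rel.mp hPs))) hMR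
    · have hMs : M ⊨ (Relations.formula (Sum.inl R : L[[M]].Relations n)
          (fun i => Constants.term (L.con (y i)))).not := by
        simp only [Sentence.Realize, Formula.realize_not, Formula.realize_rel,
          Term.realize_constants]
        exact hMR
      have hPs := hDiag ((Relations.formula (Sum.inl R : L[[M]].Relations n)
          (fun i => Constants.term (L.con (y i)))).not)
        ((BoundedFormula.IsAtomic.rel _ _).isQF.not) hMs
      simp only [Sentence.Realize, Formula.realize_not, Formula.realize_rel,
        Term.realize_constants] at hPs
      exact iff_of_false (fun h' => hPs (Formula.realize_rel.mpr ((congrArg (fun x => RelMap (L := L[[M]]) (M := P) (Sum.inl R : L[[M]].Relations n) x) (funext fun i => Term.realize_constants)).mpr (((L.lhomWithConstants M).map_onRelation R _).mpr h')))) hMR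
  exact ⟨P, _, inferInstance, hPT,
    ⟨⟨⟨fun a => ((L.con a : L[[M]].Constants) : P), inj⟩,
      fun {n} F y => hfun n F y, fun {n} R y => hrel n R y⟩⟩⟩

/-- Universal sentences are preserved by pulling back along embeddings. -/
lemma models_universalPart_of_embedding {T : L.Theory} {M N : Type (max u v)}
    [L.Structure M] [L.Structure N] [Nonempty M] [Nonempty N]
    (f : M ↪[L] N) (hN : N ⊨ T) : M ⊨ universalPart T := by
  rw [Theory.model_iff]
  rintro φ ⟨⟨n, χ, hχqf, rfl⟩, hTφ⟩
  haveI := hN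
  have hNφ : N ⊨ χ.alls := hTφ.realize_sentence N
  rw [Sentence.Realize, BoundedFormula.realize_alls] at hNφ ⊢
  intro xs
  have := hNφ (f ∘ xs)
  have heq : (default : Empty → N) = f ∘ (default : Empty → M) := funext fun x => x.elim
  rw [heq] at this
  exact (hχqf.realize_embedding f).1 this

end Aux

/-- The model companion only depends on the universal part of a theory: a model companion
of `T` is also a model companion of any theory with the same universal consequences. -/
theorem isModelCompanion_of_universalPart_eq (T Tstar S : L.Theory)
    (h : IsModelCompanion T Tstar) (hS : universalPart S = universalPart T) :
    IsModelCompanion S Tstar := by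
  obtain ⟨hmc, hTup, hTdown⟩ := h
  refine ⟨hmc, ?_, ?_⟩
  · intro M _ _ hMS
    have hMu : M ⊨ universalPart T := by
      rw [← hS]
      exact models_universalPart_of_models hMS
    obtain ⟨N, iN, nN, hNT, ⟨g⟩⟩ := exists_embedding_of_models_universalPart T M hMu
    obtain ⟨N', iN', nN', hN', ⟨g'⟩⟩ := hTup N hNT
    exact ⟨N', iN', nN', hN', ⟨g'.comp g⟩⟩
  · intro M _ _ hMT
    obtain ⟨N, iN, nN, hNT, ⟨g⟩⟩ := hTdown M hMT
    have hNu : N ⊨ universalPart S := by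
      rw [hS]
      exact models_universalPart_of_models hNT
    obtain ⟨N', iN', nN', hN', ⟨g'⟩⟩ := exists_embedding_of_models_universalPart S N hNu
    exact ⟨N', iN', nN', hN', ⟨g'.comp g⟩⟩
end

section
/- (Skolemization) For every first-order language L and every L-theory T there exist a language L' with a language morphism L → L' and an L'-theory T' containing (the image of) T such that: (i) every model of T has an expansion to an L'-structure that models T'; (ii) T' admits quantifier elimination (every L'-formula is equivalent modulo T' to a quantifier-free L'-formula); and (iii) T' is conservative over T: an L-sentence is a logical consequence of T' if and only if it is a logical consequence of T. -/
open FirstOrder FirstOrder.Language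

universe u v

namespace Skolemization

open FirstOrder.Language.BoundedFormula

variable (L : FirstOrder.Language.{u, v})

/-- Padding language to adjust universes. -/
def pad : FirstOrder.Language.{max u v, v} := ⟨fun _ => PEmpty, fun _ => PEmpty⟩

/-- The tower of iterated one-step Skolem expansions. -/
def Lseq : ℕ → FirstOrder.Language.{max u v, v}
  | 0 => L.sum pad
  | (k+1) => (Lseq k).sum (Lseq k).skolem₁

/-- The full Skolemized language. -/
def LS : FirstOrder.Language.{max u v, v} :=
  ⟨fun n => L.Functions n ⊕ (Σ k, (Lseq L k).BoundedFormula Empty (n+1)),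
   fun n => L.Relations n⟩

/-- The embedding of each stage into the full language. -/
def emb : ∀ k, Lseq L k →ᴸ LS L
  | 0 => ⟨fun _ f => Sum.elim Sum.inl (fun x => PEmpty.elim x) f,
          fun _ r => Sum.elim id (fun x => PEmpty.elim x) r⟩
  | (k+1) => ⟨fun _ f => Sum.elim (fun f₀ => (emb k).onFunction f₀) (fun φ => Sum.inr ⟨k, φ⟩) f,
              fun _ r => Sum.elim (fun r₀ => (emb k).onRelation r₀) (fun x => Empty.elim x) r⟩

/-- The embedding of the original language. -/
def F : L →ᴸ LS L := (emb L 0).comp LHom.sumInl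

theorem emb_comp_sumInl (k : ℕ) :
    (emb L (k+1)).comp (LHom.sumInl : Lseq L k →ᴸ Lseq L (k+1)) = emb L k := by
  apply LHom.funext <;> rfl

section QFlemmas

variable {L L' : FirstOrder.Language.{u, v}} {α β : Type*} {m n : ℕ}

theorem isAtomic_onBoundedFormula (g : L →ᴸ L') {φ : L.BoundedFormula α m} (h : φ.IsAtomic) :
    (g.onBoundedFormula φ).IsAtomic := by
  induction h with
  | equal t₁ t₂ => exact IsAtomic.equal _ _
  | rel R ts => exact IsAtomic.rel _ _

theorem isQF_onBoundedFormula (g : L →ᴸ L') {φ : L.BoundedFormula α m} (h : φ.IsQF) :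
    (g.onBoundedFormula φ).IsQF := by
  induction h with
  | falsum => exact IsQF.falsum
  | of_isAtomic h => exact (isAtomic_onBoundedFormula g h).isQF
  | imp _ _ ih1 ih2 => exact ih1.imp ih2

theorem isQF_toFormula {φ : L.BoundedFormula α m} (h : φ.IsQF) : φ.toFormula.IsQF := by
  induction h with
  | falsum => exact IsQF.falsum
  | of_isAtomic h =>
    cases h with
    | equal t₁ t₂ => exact (IsAtomic.equal _ _).isQF
    | rel R ts => exact (IsAtomic.rel _ _).isQF
  | imp _ _ ih1 ih2 => exact ih1.imp ih2

theorem isQF_subst {φ : L.BoundedFormula α m} (f : α → L.Term β) (h : φ.IsQF) :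
    (φ.subst f).IsQF := by
  induction h with
  | falsum => exact IsQF.falsum
  | of_isAtomic h =>
    cases h with
    | equal t₁ t₂ => exact (IsAtomic.equal _ _).isQF
    | rel R ts => exact (IsAtomic.rel _ _).isQF
  | imp _ _ ih1 ih2 => exact ih1.imp ih2

end QFlemmas
section Subst

variable {L'' : FirstOrder.Language.{u, v}} {N n m : ℕ}

/-- Substitute the last (bound) variable of a formula by a term. -/
def instLast (ψ : L''.BoundedFormula Empty (N+1)) (t : L''.Term (Empty ⊕ Fin N)) :
    L''.BoundedFormula Empty N :=
  BoundedFormula.relabel id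
    (BoundedFormula.subst ψ.toFormula
      (Sum.elim (fun e => Empty.elim e)
        (Fin.snoc (fun i => Term.var (Sum.inr i)) t)))

theorem isQF_instLast {ψ : L''.BoundedFormula Empty (N+1)} {t : L''.Term (Empty ⊕ Fin N)}
    (h : ψ.IsQF) : (instLast ψ t).IsQF :=
  ((isQF_subst _ (isQF_toFormula h)).relabel _)

/-- Turn a formula with no free variables and `n + m` bound variables into one with
`Fin n` free variables and `m` bound variables. -/
def pullUp (ρ : L''.BoundedFormula Empty (n+m)) : L''.BoundedFormula (Fin n) m :=
  BoundedFormula.relabel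
    (Sum.elim (fun e => Empty.elim e)
      (Fin.addCases (fun i => Sum.inl i) (fun j => Sum.inr j) :
        Fin (n+m) → Fin n ⊕ Fin m))
    ρ.toFormula

theorem isQF_pullUp {ρ : L''.BoundedFormula Empty (n+m)} (h : ρ.IsQF) : (pullUp ρ).IsQF :=
  (isQF_toFormula h).relabel _

variable {B : Type*} [L''.Structure B] [Nonempty B]

theorem realize_toFormula' {α : Type*} {k : ℕ} (φ : L''.BoundedFormula α k)
    (v : α ⊕ Fin k → B) (xs : Fin 0 → B) :
    BoundedFormula.Realize φ.toFormula v xs ↔ φ.Realize (v ∘ Sum.inl) (v ∘ Sum.inr) := by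
  rw [show xs = default from Subsingleton.elim _ _]
  exact BoundedFormula.realize_toFormula φ v

theorem realize_instLast (ψ : L''.BoundedFormula Empty (N+1)) (t : L''.Term (Empty ⊕ Fin N))
    (x : Fin N → B) :
    (instLast ψ t).Realize default x ↔
      ψ.Realize default (Fin.snoc x (t.realize (Sum.elim default x))) := by
  rw [instLast, BoundedFormula.realize_relabel, BoundedFormula.realize_subst, realize_toFormula']
  have hx : (x ∘ Fin.castAdd 0) = x := rfl
  rw [hx]
  refine iff_of_eq ?_
  congr 1
  · funext e; exact e.elim
  · funext j
    refine Fin.lastCases ?_ (fun i => ?_) j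
    · simp
    · simp

theorem realize_pullUp (ρ : L''.BoundedFormula Empty (n+m)) (v : Fin n → B) (xs : Fin m → B) :
    (pullUp ρ).Realize v xs ↔ ρ.Realize default (Fin.addCases v xs) := by
  rw [pullUp, BoundedFormula.realize_relabel, realize_toFormula']
  refine iff_of_eq ?_
  congr 1
  · funext e; exact e.elim
  · funext j
    refine Fin.addCases (fun i => ?_) (fun i => ?_) j
    · simp
    · simp

end Subst
section Axioms

variable {K : FirstOrder.Language.{u, v}} {N : ℕ}

/-- The Skolem term for a formula. -/
def skTerm (φ : K.BoundedFormula Empty (N+1)) : (K.sum K.skolem₁).Term (Empty ⊕ Fin N) :=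
  Term.func (Sum.inr φ : (K.sum K.skolem₁).Functions N) (fun i => Term.var (Sum.inr i))

/-- The Skolem axiom for a formula, as a sentence of the one-step Skolem expansion. -/
def axSent (φ : K.BoundedFormula Empty (N+1)) : (K.sum K.skolem₁).Sentence :=
  ((((LHom.sumInl : K →ᴸ K.sum K.skolem₁).onBoundedFormula φ).ex).imp
    (instLast ((LHom.sumInl : K →ᴸ K.sum K.skolem₁).onBoundedFormula φ) (skTerm φ))).alls

theorem realize_axSent {B : Type*} [(K.sum K.skolem₁).Structure B] [Nonempty B]
    (φ : K.BoundedFormula Empty (N+1)) :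
    B ⊨ axSent φ ↔ ∀ x : Fin N → B,
      (∃ a, ((LHom.sumInl : K →ᴸ K.sum K.skolem₁).onBoundedFormula φ).Realize default
        (Fin.snoc x a)) →
      ((LHom.sumInl : K →ᴸ K.sum K.skolem₁).onBoundedFormula φ).Realize default
        (Fin.snoc x (Structure.funMap (L := K.sum K.skolem₁) (M := B) (Sum.inr φ) x)) := by
  rw [Sentence.Realize, axSent, BoundedFormula.realize_alls]
  refine forall_congr' fun x => ?_
  rw [BoundedFormula.realize_imp, BoundedFormula.realize_ex, realize_instLast]
  rfl

/-- In the canonical (choice-built) expansion, the Skolem axioms hold. -/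
theorem axSent_realize_self {M : Type*} [K.Structure M] [Nonempty M]
    (φ : K.BoundedFormula Empty (N+1)) : M ⊨ axSent φ := by
  rw [realize_axSent]
  rintro x ⟨a, ha⟩
  rw [LHom.realize_onBoundedFormula] at ha ⊢
  have hf : Structure.funMap (L := K.sum K.skolem₁) (M := M) (Sum.inr φ) x =
      Classical.epsilon (fun a => φ.Realize default (Fin.snoc x a)) := rfl
  rw [hf]
  exact Classical.epsilon_spec (p := fun a => φ.Realize default (Fin.snoc x a)) ⟨a, ha⟩

/-- In any structure satisfying the Skolem axiom, existentials are witnessed by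
the Skolem function. -/
theorem axSent_spec {B : Type*} [K.Structure B] [(K.sum K.skolem₁).Structure B] [Nonempty B]
    [(LHom.sumInl : K →ᴸ K.sum K.skolem₁).IsExpansionOn B]
    (φ : K.BoundedFormula Empty (N+1)) (h : B ⊨ axSent φ) (x : Fin N → B) :
    (∃ a, φ.Realize default (Fin.snoc x a)) ↔
      φ.Realize default
        (Fin.snoc x (Structure.funMap (L := K.sum K.skolem₁) (M := B) (Sum.inr φ) x)) := by
  rw [realize_axSent] at h
  have h' := h x
  simp only [LHom.realize_onBoundedFormula] at h'
  exact ⟨h', fun hw => ⟨_, hw⟩⟩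

end Axioms
section Rep

variable {L} {α : Type*} {m : ℕ}

theorem emb_onFunction_step {n k : ℕ} (f : (Lseq L k).Functions n) :
    (emb L (k+1)).onFunction (Sum.inl f : (Lseq L (k+1)).Functions n) =
      (emb L k).onFunction f := rfl

theorem emb_onRelation_step {n k : ℕ} (r : (Lseq L k).Relations n) :
    (emb L (k+1)).onRelation (Sum.inl r : (Lseq L (k+1)).Relations n) =
      (emb L k).onRelation r := rfl

theorem emb_onTerm_step {k : ℕ} (t : (Lseq L k).Term α) :
    (emb L (k+1)).onTerm ((LHom.sumInl : Lseq L k →ᴸ Lseq L (k+1)).onTerm t) =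
      (emb L k).onTerm t := by
  have h := congrFun
    (LHom.comp_onTerm (α := α) (emb L (k+1)) (LHom.sumInl : Lseq L k →ᴸ Lseq L (k+1))) t
  rw [emb_comp_sumInl] at h
  exact h.symm

theorem emb_onBoundedFormula_step {k : ℕ} (θ : (Lseq L k).BoundedFormula α m) :
    (emb L (k+1)).onBoundedFormula
        ((LHom.sumInl : Lseq L k →ᴸ Lseq L (k+1)).onBoundedFormula θ) =
      (emb L k).onBoundedFormula θ := by
  have h := congrFun
    (LHom.comp_onBoundedFormula (α := α) (n := m) (emb L (k+1))
      (LHom.sumInl : Lseq L k →ᴸ Lseq L (k+1))) θ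
  rw [emb_comp_sumInl] at h
  exact h.symm

theorem rep_fun_mono {n : ℕ} {f : (LS L).Functions n} {k K : ℕ} (hkK : k ≤ K)
    (h : ∃ f₀, (emb L k).onFunction f₀ = f) : ∃ f₀, (emb L K).onFunction f₀ = f := by
  induction K, hkK using Nat.le_induction with
  | base => exact h
  | succ K hK ih =>
    obtain ⟨f₀, h₀⟩ := ih
    exact ⟨Sum.inl f₀, by rw [emb_onFunction_step, h₀]⟩

theorem rep_rel_mono {n : ℕ} {r : (LS L).Relations n} {k K : ℕ} (hkK : k ≤ K)
    (h : ∃ r₀, (emb L k).onRelation r₀ = r) : ∃ r₀, (emb L K).onRelation r₀ = r := by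
  induction K, hkK using Nat.le_induction with
  | base => exact h
  | succ K hK ih =>
    obtain ⟨r₀, h₀⟩ := ih
    exact ⟨Sum.inl r₀, by rw [emb_onRelation_step, h₀]⟩

theorem rep_term_mono {t : (LS L).Term α} {k K : ℕ} (hkK : k ≤ K)
    (h : ∃ t₀, (emb L k).onTerm t₀ = t) : ∃ t₀, (emb L K).onTerm t₀ = t := by
  induction K, hkK using Nat.le_induction with
  | base => exact h
  | succ K hK ih =>
    obtain ⟨t₀, h₀⟩ := ih
    exact ⟨_, (emb_onTerm_step t₀).trans h₀⟩

theorem rep_qf_mono {θ : (LS L).BoundedFormula α m} {k K : ℕ} (hkK : k ≤ K)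
    (h : ∃ θ₀, θ₀.IsQF ∧ (emb L k).onBoundedFormula θ₀ = θ) :
    ∃ θ₀, θ₀.IsQF ∧ (emb L K).onBoundedFormula θ₀ = θ := by
  induction K, hkK using Nat.le_induction with
  | base => exact h
  | succ K hK ih =>
    obtain ⟨θ₀, hqf, h₀⟩ := ih
    exact ⟨_, isQF_onBoundedFormula _ hqf, (emb_onBoundedFormula_step θ₀).trans h₀⟩

theorem exists_rep_term (t : (LS L).Term α) : ∃ k t₀, (emb L k).onTerm t₀ = t := by
  induction t with
  | var i => exact ⟨0, Term.var i, rfl⟩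
  | @func l f ts ih =>
    choose kk tt hh using ih
    obtain ⟨kf, f₀, hf⟩ : ∃ k f₀, (emb L k).onFunction f₀ = f := by
      cases f with
      | inl g => exact ⟨0, Sum.inl g, rfl⟩
      | inr p => exact ⟨p.1 + 1, Sum.inr p.2, rfl⟩
    set K := max kf (Finset.univ.sup kk) with hK
    obtain ⟨f₁, hf₁⟩ := rep_fun_mono (le_max_left _ _) ⟨f₀, hf⟩
    have hts : ∀ i, ∃ t₀, (emb L K).onTerm t₀ = ts i := fun i =>
      rep_term_mono (le_trans (Finset.le_sup (Finset.mem_univ i)) (le_max_right _ _))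
        ⟨tt i, hh i⟩
    choose tt' hh' using hts
    refine ⟨K, Term.func f₁ tt', ?_⟩
    show Term.func ((emb L K).onFunction f₁) (fun i => (emb L K).onTerm (tt' i)) =
      Term.func f ts
    rw [hf₁]
    congr 1
    funext i
    exact hh' i

theorem exists_rep_qf {θ : (LS L).BoundedFormula α m} (h : θ.IsQF) :
    ∃ k θ₀, θ₀.IsQF ∧ (emb L k).onBoundedFormula θ₀ = θ := by
  induction h with
  | falsum => exact ⟨0, BoundedFormula.falsum, BoundedFormula.IsQF.falsum, rfl⟩
  | of_isAtomic h =>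
    cases h with
    | equal t₁ t₂ =>
      obtain ⟨k₁, s₁, hs₁⟩ := exists_rep_term t₁
      obtain ⟨k₂, s₂, hs₂⟩ := exists_rep_term t₂
      obtain ⟨u₁, hu₁⟩ := rep_term_mono (le_max_left k₁ k₂) ⟨s₁, hs₁⟩
      obtain ⟨u₂, hu₂⟩ := rep_term_mono (le_max_right k₁ k₂) ⟨s₂, hs₂⟩
      refine ⟨max k₁ k₂, u₁.bdEqual u₂, (BoundedFormula.IsAtomic.equal _ _).isQF, ?_⟩
      show ((emb L (max k₁ k₂)).onTerm u₁).bdEqual ((emb L (max k₁ k₂)).onTerm u₂) =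
        t₁.bdEqual t₂
      rw [hu₁, hu₂]
    | @rel l R ts =>
      choose kk tt hh using fun i => exists_rep_term (ts i)
      set K := Finset.univ.sup kk with hK
      have hts : ∀ i, ∃ t₀, (emb L K).onTerm t₀ = ts i := fun i =>
        rep_term_mono (Finset.le_sup (Finset.mem_univ i)) ⟨tt i, hh i⟩
      choose tt' hh' using hts
      obtain ⟨R₁, hR₁⟩ := rep_rel_mono (Nat.zero_le K) ⟨(Sum.inl R : (Lseq L 0).Relations l), rfl⟩
      refine ⟨K, R₁.boundedFormula tt', (BoundedFormula.IsAtomic.rel _ _).isQF, ?_⟩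
      show ((emb L K).onRelation R₁).boundedFormula (fun i => (emb L K).onTerm (tt' i)) =
        R.boundedFormula ts
      rw [hR₁]
      congr 1
      funext i
      exact hh' i
  | imp h₁ h₂ ih₁ ih₂ =>
    obtain ⟨k₁, θ₁, hq₁, hθ₁⟩ := ih₁
    obtain ⟨k₂, θ₂, hq₂, hθ₂⟩ := ih₂
    obtain ⟨ρ₁, hρq₁, hρ₁⟩ := rep_qf_mono (le_max_left k₁ k₂) ⟨θ₁, hq₁, hθ₁⟩
    obtain ⟨ρ₂, hρq₂, hρ₂⟩ := rep_qf_mono (le_max_right k₁ k₂) ⟨θ₂, hq₂, hθ₂⟩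
    refine ⟨max k₁ k₂, ρ₁.imp ρ₂, hρq₁.imp hρq₂, ?_⟩
    show ((emb L (max k₁ k₂)).onBoundedFormula ρ₁).imp
      ((emb L (max k₁ k₂)).onBoundedFormula ρ₂) = _
    rw [hρ₁, hρ₂]

end Rep
/-- The Skolem theory. -/
def TS (T : L.Theory) : (LS L).Theory :=
  (F L).onTheory T ∪
    { S | ∃ (k N : ℕ) (φ : (Lseq L k).BoundedFormula Empty (N+1)),
        S = (emb L (k+1)).onSentence (axSent φ) }

section Semantics

variable {L} {T : L.Theory} {A : Type*} [(LS L).Structure A] [Nonempty A]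

theorem ex_iff (hA : A ⊨ TS L T) {k N : ℕ}
    (φ : (Lseq L k).BoundedFormula Empty (N+1)) (x : Fin N → A) :
    letI := (emb L k).reduct A
    ((∃ a, φ.Realize default (Fin.snoc x a)) ↔
      φ.Realize default (Fin.snoc x
        (Structure.funMap (L := LS L) (M := A) (Sum.inr ⟨k, φ⟩) x))) := by
  letI iK : (Lseq L k).Structure A := (emb L k).reduct A
  letI iK1 : ((Lseq L k).sum (Lseq L k).skolem₁).Structure A := (emb L (k+1)).reduct A
  haveI hexp : (LHom.sumInl : Lseq L k →ᴸ (Lseq L k).sum (Lseq L k).skolem₁).IsExpansionOn A :=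
    ⟨fun _f _x => rfl, fun _r _x => rfl⟩
  letI iK1' : (Lseq L (k+1)).Structure A := iK1
  haveI hexp2 : (emb L (k+1)).IsExpansionOn A := ⟨fun _f _x => rfl, fun _r _x => rfl⟩
  haveI : A ⊨ TS L T := hA
  have hmem : (emb L (k+1)).onSentence (axSent φ) ∈ TS L T := Or.inr ⟨k, N, φ, rfl⟩
  have hax : A ⊨ (emb L (k+1)).onSentence (axSent φ) :=
    (TS L T).realize_sentence_of_mem hmem
  replace hax := ((emb L (k+1)).realize_onSentence (M := A) (axSent φ)).1 hax
  have := axSent_spec (B := A) φ hax x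
  exact this

end Semantics

section Expansion

variable {L} (M : Type*) [L.Structure M] [Nonempty M]

instance padStructure : (pad.{u,v}).Structure M :=
  ⟨fun f => PEmpty.elim f, fun r => PEmpty.elim r⟩

/-- The canonical structures on a model of `L` at each stage. -/
noncomputable def Mstr : ∀ k, (Lseq L k).Structure M
  | 0 => inferInstanceAs ((L.sum pad).Structure M)
  | (k+1) => letI := Mstr k
      inferInstanceAs (((Lseq L k).sum (Lseq L k).skolem₁).Structure M)

/-- The canonical structure on a model of `L` for the full Skolem language. -/
noncomputable def MstrS : (LS L).Structure M where
  funMap := fun {n} f x =>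
    Sum.elim (fun f₀ => Structure.funMap f₀ x)
      (fun p => Structure.funMap (L := Lseq L (p.1+1)) (M := M)
        (self := Mstr M (p.1+1)) (Sum.inr p.2) x) f
  RelMap := fun {n} r x => Structure.RelMap (L := L) (M := M) r x

theorem emb_isExpansionOn : ∀ k,
    @LHom.IsExpansionOn _ _ (emb L k) M (Mstr M k) (MstrS M)
  | 0 => by
    letI := Mstr (L := L) M 0
    letI := MstrS (L := L) M
    refine ⟨fun {n} f x => ?_, fun {n} r x => ?_⟩
    · cases f with
      | inl f₀ => rfl
      | inr f₀ => exact f₀.elim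
    · cases r with
      | inl r₀ => rfl
      | inr r₀ => exact r₀.elim
  | (k+1) => by
    letI := Mstr (L := L) M k
    letI := Mstr (L := L) M (k+1)
    letI := MstrS (L := L) M
    have ih := emb_isExpansionOn k
    refine ⟨fun {n} f x => ?_, fun {n} r x => ?_⟩
    · cases f with
      | inl f₀ => exact @LHom.IsExpansionOn.map_onFunction _ _ _ _ (Mstr M k) (MstrS M) ih _ f₀ x
      | inr f₀ => rfl
    · cases r with
      | inl r₀ => exact @LHom.IsExpansionOn.map_onRelation _ _ _ _ (Mstr M k) (MstrS M) ih _ r₀ x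
      | inr r₀ => exact r₀.elim

theorem F_isExpansionOn : @LHom.IsExpansionOn _ _ (F L) M ‹L.Structure M› (MstrS M) := by
  letI := MstrS (L := L) M
  exact ⟨fun {n} f x => rfl, fun {n} r x => rfl⟩

end Expansion
section ModelTS

variable {L} (M : Type*) [L.Structure M] [Nonempty M]

theorem model_TS (T : L.Theory) (hM : M ⊨ T) :
    @Theory.Model (LS L) M (MstrS (L := L) M) (TS L T) := by
  letI := MstrS (L := L) M
  haveI := F_isExpansionOn (L := L) M
  rw [Theory.model_iff]
  rintro φ (⟨φ₀, hφ₀, rfl⟩ | ⟨k, N, ψ, rfl⟩)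
  · rw [LHom.realize_onSentence]
    haveI := hM
    exact T.realize_sentence_of_mem hφ₀
  · letI := Mstr (L := L) M k
    letI := Mstr (L := L) M (k+1)
    haveI := emb_isExpansionOn (L := L) M (k+1)
    refine ((emb L (k+1)).realize_onSentence (M := M) (axSent ψ)).2 ?_
    exact axSent_realize_self ψ

end ModelTS

section FinLemmas

variable {A : Type*} {n m : ℕ}

theorem snoc_comp_castAdd (v : Fin n → A) (xs : Fin m → A) (a : A) :
    (Fin.snoc (Fin.addCases v xs : Fin (n+m) → A) a : Fin (n+m+1) → A) ∘
      Fin.castAdd (m+1) = v := by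
  funext i
  have hcast : (Fin.castAdd (m+1) i : Fin (n+(m+1))) = Fin.castSucc (Fin.castAdd m i) := by
    ext; simp
  show (Fin.snoc (Fin.addCases v xs : Fin (n+m) → A) a : Fin (n+m+1) → A)
    (Fin.castAdd (m+1) i) = v i
  rw [hcast, Fin.snoc_castSucc, Fin.addCases_left]

theorem snoc_comp_natAdd (v : Fin n → A) (xs : Fin m → A) (a : A) :
    (Fin.snoc (Fin.addCases v xs : Fin (n+m) → A) a : Fin (n+m+1) → A) ∘
      Fin.natAdd n = Fin.snoc xs a := by
  funext j
  refine Fin.lastCases ?_ (fun i => ?_) j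
  · have h1 : (Fin.natAdd n (Fin.last m) : Fin (n+(m+1))) = Fin.last (n+m) := by
      ext; simp
    show (Fin.snoc (Fin.addCases v xs : Fin (n+m) → A) a : Fin (n+m+1) → A)
      (Fin.natAdd n (Fin.last m)) = _
    rw [h1, Fin.snoc_last, Fin.snoc_last]
  · have h1 : (Fin.natAdd n (Fin.castSucc i) : Fin (n+(m+1))) =
      Fin.castSucc (Fin.natAdd n i) := by ext; simp
    show (Fin.snoc (Fin.addCases v xs : Fin (n+m) → A) a : Fin (n+m+1) → A)
      (Fin.natAdd n (Fin.castSucc i)) = _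
    rw [h1, Fin.snoc_castSucc, Fin.snoc_castSucc, Fin.addCases_right]

end FinLemmas

section SkolemStep

variable {L} {T : L.Theory}

theorem realize_relabel_inr {K : FirstOrder.Language.{u, v}} {B : Type*} [K.Structure B]
    {n m : ℕ} (θ₀ : K.BoundedFormula (Fin n) (m+1)) (v' : Empty → B)
    (y : Fin (n+(m+1)) → B) :
    (BoundedFormula.relabel (Sum.inr : Fin n → Empty ⊕ Fin n) θ₀).Realize v' y ↔
      θ₀.Realize (y ∘ Fin.castAdd (m+1)) (y ∘ Fin.natAdd n) := by
  rw [BoundedFormula.realize_relabel]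
  rfl

theorem skolem_step (T : L.Theory) {n m : ℕ} (θ : (LS L).BoundedFormula (Fin n) (m+1))
    (hQF : θ.IsQF) :
    ∃ χ : (LS L).BoundedFormula (Fin n) m, χ.IsQF ∧ TS L T ⊨ᵇ θ.ex.iff χ := by
  obtain ⟨k, θ₀, hq, rfl⟩ := exists_rep_qf hQF
  have hq' : ((BoundedFormula.relabel (Sum.inr : Fin n → Empty ⊕ Fin n) θ₀ :
      (Lseq L k).BoundedFormula Empty (n+m+1))).IsQF := hq.relabel _
  set φ' : (Lseq L k).BoundedFormula Empty (n+m+1) :=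
    BoundedFormula.relabel (Sum.inr : Fin n → Empty ⊕ Fin n) θ₀ with hφ'
  set ρ : ((Lseq L k).sum (Lseq L k).skolem₁).BoundedFormula Empty (n+m) :=
    instLast ((LHom.sumInl : Lseq L k →ᴸ (Lseq L k).sum (Lseq L k).skolem₁).onBoundedFormula φ')
      (skTerm φ') with hρ
  refine ⟨(emb L (k+1)).onBoundedFormula (pullUp ρ),
    isQF_onBoundedFormula _ (isQF_pullUp (isQF_instLast (isQF_onBoundedFormula _ hq'))), ?_⟩
  intro A v xs
  haveI : (A : Type (max u v)) ⊨ TS L T := A.is_model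
  letI iK : (Lseq L k).Structure A := (emb L k).reduct A
  letI iK1 : ((Lseq L k).sum (Lseq L k).skolem₁).Structure A := (emb L (k+1)).reduct A
  letI iK1' : (Lseq L (k+1)).Structure A := iK1
  haveI hexp : (LHom.sumInl : Lseq L k →ᴸ (Lseq L k).sum (Lseq L k).skolem₁).IsExpansionOn A :=
    ⟨fun _f _x => rfl, fun _r _x => rfl⟩
  haveI hexp2 : (emb L (k+1)).IsExpansionOn A := ⟨fun _f _x => rfl, fun _r _x => rfl⟩
  haveI hexpk : (emb L k).IsExpansionOn A := ⟨fun _f _x => rfl, fun _r _x => rfl⟩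
  rw [BoundedFormula.realize_iff, BoundedFormula.realize_ex]
  -- right side
  rw [LHom.realize_onBoundedFormula]
  erw [realize_pullUp, realize_instLast]
  set w : Fin (n+m) → A := Fin.addCases v xs with hw
  haveI hexp' : @LHom.IsExpansionOn _ _
      (LHom.sumInl : Lseq L k →ᴸ (Lseq L k).sum (Lseq L k).skolem₁) A iK iK1' := hexp
  erw [@LHom.realize_onBoundedFormula _ _ A iK _ iK1' _ hexp' _ φ']
  -- identify the skolem value
  have hsk : ((skTerm φ').realize (Sum.elim (default : Empty → A) w) : A) =
      Structure.funMap (L := LS L) (M := A) (Sum.inr ⟨k, φ'⟩) w := rfl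
  erw [hsk]
  have key := ex_iff (A := A) A.is_model φ' w
  rw [← key]
  -- now both sides are about φ' instances; translate to θ₀
  have htrans : ∀ a : A, φ'.Realize (default : Empty → A) (Fin.snoc w a) ↔
      θ₀.Realize v (Fin.snoc xs a) := by
    intro a
    rw [hφ', realize_relabel_inr]
    rw [hw]
    rw [snoc_comp_castAdd v xs a, snoc_comp_natAdd v xs a]
  simp only [LHom.realize_onBoundedFormula]
  exact exists_congr fun a => (htrans a).symm

end SkolemStep
section QE

variable {L}

theorem qe (T : L.Theory) : ∀ {n m : ℕ} (φ : (LS L).BoundedFormula (Fin n) m),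
    ∃ ψ : (LS L).BoundedFormula (Fin n) m, ψ.IsQF ∧ TS L T ⊨ᵇ φ.iff ψ := by
  intro n m φ
  induction φ with
  | falsum =>
    exact ⟨BoundedFormula.falsum, BoundedFormula.IsQF.falsum,
      fun A v xs => BoundedFormula.realize_iff.2 Iff.rfl⟩
  | equal t₁ t₂ =>
    exact ⟨_, (BoundedFormula.IsAtomic.equal t₁ t₂).isQF,
      fun A v xs => BoundedFormula.realize_iff.2 Iff.rfl⟩
  | rel R ts =>
    exact ⟨_, (BoundedFormula.IsAtomic.rel R ts).isQF,
      fun A v xs => BoundedFormula.realize_iff.2 Iff.rfl⟩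
  | imp φ₁ φ₂ ih₁ ih₂ =>
    obtain ⟨ψ₁, hq₁, he₁⟩ := ih₁
    obtain ⟨ψ₂, hq₂, he₂⟩ := ih₂
    refine ⟨ψ₁.imp ψ₂, hq₁.imp hq₂, fun A v xs => ?_⟩
    have h₁ := BoundedFormula.realize_iff.1 (he₁ A v xs)
    have h₂ := BoundedFormula.realize_iff.1 (he₂ A v xs)
    rw [BoundedFormula.realize_iff, BoundedFormula.realize_imp, BoundedFormula.realize_imp,
      h₁, h₂]
  | all φ ih =>
    obtain ⟨ψ, hqψ, heψ⟩ := ih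
    obtain ⟨χ, hqχ, heχ⟩ := skolem_step T ψ.not hqψ.not
    refine ⟨χ.not, hqχ.not, fun A v xs => ?_⟩
    have hψ : ∀ a : A, φ.Realize v (Fin.snoc xs a) ↔ ψ.Realize v (Fin.snoc xs a) :=
      fun a => BoundedFormula.realize_iff.1 (heψ A v (Fin.snoc xs a))
    have hχ := BoundedFormula.realize_iff.1 (heχ A v xs)
    rw [BoundedFormula.realize_ex] at hχ
    rw [BoundedFormula.realize_iff, BoundedFormula.realize_all, BoundedFormula.realize_not, ← hχ]
    push_neg
    refine forall_congr' fun a => ?_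
    rw [BoundedFormula.realize_not, hψ a, not_not]

end QE

end Skolemization

open Skolemization in
/-- Skolemization: every theory `T` has a conservative extension `T'` in an expanded
language which admits quantifier elimination, such that every model of `T` expands to a
model of `T'`. -/
theorem skolemization (L : FirstOrder.Language.{u, v}) (T : L.Theory) :
    ∃ (L' : FirstOrder.Language.{max u v, v}) (F : L →ᴸ L') (T' : L'.Theory),
      -- `T'` contains the image of `T`
      F.onTheory T ⊆ T' ∧
      -- every model of `T` has an expansion to an `L'`-structure modelling `T'`
      (∀ (M : Type (max u v)) [inst : L.Structure M] [Nonempty M], M ⊨ T →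
        ∃ inst' : L'.Structure M,
          @FirstOrder.Language.LHom.IsExpansionOn L L' F M inst inst' ∧
          @FirstOrder.Language.Theory.Model L' M inst' T') ∧
      -- `T'` admits quantifier elimination
      (∀ (n : ℕ) (φ : L'.Formula (Fin n)), ∃ ψ : L'.Formula (Fin n),
        ψ.IsQF ∧ T' ⊨ᵇ φ.iff ψ) ∧
      -- `T'` is conservative over `T`
      (∀ φ : L.Sentence, T' ⊨ᵇ F.onSentence φ ↔ T ⊨ᵇ φ) := by
  refine ⟨LS L, F L, TS L T, Set.subset_union_left, ?_, ?_, ?_⟩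
  · intro M _ _ hM
    exact ⟨MstrS (L := L) M, F_isExpansionOn M, model_TS M T hM⟩
  · intro n φ
    exact qe T φ
  · intro φ
    constructor
    · intro h Mm v xs
      letI := MstrS (L := L) (Mm : Type (max u v))
      haveI := F_isExpansionOn (L := L) (Mm : Type (max u v))
      haveI hT' := model_TS (L := L) (Mm : Type (max u v)) T Mm.is_model
      have hreal := h ⟨Mm⟩ default default
      have hv : v = (default : Empty → Mm) := funext fun e => e.elim
      have hxs : xs = (default : Fin 0 → Mm) := Subsingleton.elim _ _
      rw [hv, hxs]
      exact ((F L).realize_onSentence (M := _) φ).1 hreal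
    · intro h A v xs
      letI : L.Structure A := (F L).reduct A
      haveI : (F L).IsExpansionOn (A : Type (max u v)) := LHom.isExpansionOn_reduct _ _
      haveI hmT : (A : Type (max u v)) ⊨ T := by
        have h1 : (A : Type (max u v)) ⊨ (F L).onTheory T :=
          (A.is_model).mono Set.subset_union_left
        exact (LHom.onTheory_model (F L) T).1 h1
      have hreal := h ⟨A⟩ default default
      have hv : v = (default : Empty → A) := funext fun e => e.elim
      have hxs : xs = (default : Fin 0 → A) := Subsingleton.elim _ _
      rw [hv, hxs]
      exact ((F L).realize_onSentence (M := _) φ).2 hreal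
end

section
/- Every model of a universal first-order theory embeds into an existentially closed model of that theory: if every sentence of the L-theory T is universal and M is a model of T, then there is a model N of T that is existentially closed for T, together with an L-embedding of M into N. -/
open FirstOrder FirstOrder.Language

universe u v

variable {L : FirstOrder.Language.{u, v}}

/-! ### Auxiliary lemmas -/

universe w

section Aux

open FirstOrder.Language

lemma ECAux.isUniversal_alls {α : Type*} : ∀ {n : ℕ} (χ : L.BoundedFormula α n),
    χ.IsUniversal → χ.alls.IsUniversal
  | 0, χ, h => h
  | _ + 1, χ, h => ECAux.isUniversal_alls χ.all h.all

lemma ECAux.isExistential_exs {α : Type*} : ∀ {n : ℕ} (χ : L.BoundedFormula α n),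
    χ.IsExistential → χ.exs.IsExistential
  | 0, χ, h => h
  | _ + 1, χ, h => ECAux.isExistential_exs χ.ex h.ex

lemma IsUniversalFormula.isUniversal {α : Type*} {φ : L.Formula α}
    (h : IsUniversalFormula φ) : BoundedFormula.IsUniversal φ := by
  obtain ⟨n, χ, hqf, rfl⟩ := h
  exact ECAux.isUniversal_alls χ hqf.isUniversal

lemma IsExistentialFormula.isExistential {α : Type*} {φ : L.Formula α}
    (h : IsExistentialFormula φ) : BoundedFormula.IsExistential φ := by
  obtain ⟨n, χ, hqf, rfl⟩ := h
  exact ECAux.isExistential_exs χ hqf.isExistential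

variable {M N : Type*} [L.Structure M] [L.Structure N]

lemma ECAux.realize_embedding_qf {α : Type*} {φ : L.Formula α}
    (h : BoundedFormula.IsQF φ) (g : M ↪[L] N) {v : α → M} :
    φ.Realize (g ∘ v) ↔ φ.Realize v := by
  have := h.realize_embedding g (v := v) (xs := (default : Fin 0 → M))
  rwa [Subsingleton.elim (g ∘ (default : Fin 0 → M)) default] at this

lemma ECAux.realize_embedding_ex {α : Type*} {φ : L.Formula α}
    (h : BoundedFormula.IsExistential φ) (g : M ↪[L] N) {v : α → M} :
    φ.Realize v → φ.Realize (g ∘ v) := by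
  intro hv
  have := h.realize_embedding g (v := v) (xs := (default : Fin 0 → M)) hv
  rwa [Subsingleton.elim (g ∘ (default : Fin 0 → M)) default] at this

lemma ECAux.realize_embedding_univ {α : Type*} {φ : L.Formula α}
    (h : BoundedFormula.IsUniversal φ) (g : M ↪[L] N) {v : α → M} :
    φ.Realize (g ∘ v) → φ.Realize v := by
  intro hv
  refine h.realize_embedding g (v := v) (xs := (default : Fin 0 → M)) ?_
  rwa [Subsingleton.elim (g ∘ (default : Fin 0 → M)) default]

end Aux

/-! ### The one-step extension lemma -/

/-- The `L[[A]]`-sentence expressing `φ(a)` for parameters `a` from `A`. -/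
def ECAux.sentOf {A : Type w} {k : ℕ} (φ : L.Formula (Fin k)) (a : Fin k → A) :
    (L[[A]]).Sentence :=
  Formula.equivSentence (φ.relabel a)

lemma ECAux.realize_sentOf {A : Type w} (C : Type*) [L.Structure C] [L[[A]].Structure C]
    [(L.lhomWithConstants A).IsExpansionOn C] {k : ℕ} (φ : L.Formula (Fin k))
    (a : Fin k → A) :
    C ⊨ ECAux.sentOf φ a ↔ φ.Realize (fun i => ((L.con (a i)) : C)) := by
  rw [ECAux.sentOf, Formula.realize_equivSentence, Formula.realize_relabel]
  exact Iff.rfl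

/-- Every model of a theory `T` embeds into a model `B` of `T` such that every existential
formula with parameters from `A` that is realized in some `T`-model extension of `B` is
already realized in `B`. -/
lemma ECAux.exists_onestep (T : L.Theory) (A : Type (max u v)) [L.Structure A] [Nonempty A]
    (hA : A ⊨ T) :
    ∃ (B : Type (max u v)) (_ : L.Structure B) (_ : Nonempty B) (f : A ↪[L] B),
      B ⊨ T ∧
      ∀ (k : ℕ) (φ : L.Formula (Fin k)), IsExistentialFormula φ → ∀ a : Fin k → A,
        (∃ (C : Type (max u v)) (_ : L.Structure C) (_ : Nonempty C),
          C ⊨ T ∧ ∃ g : B ↪[L] C, φ.Realize (g ∘ f ∘ a)) →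
        φ.Realize (f ∘ a) := by
  classical
  have hsent : ∀ (C : Type (max u v)) [L.Structure C] [L[[A]].Structure C]
      [(L.lhomWithConstants A).IsExpansionOn C] (k : ℕ) (φ : L.Formula (Fin k))
      (a : Fin k → A), C ⊨ ECAux.sentOf φ a ↔ φ.Realize (fun i => ((L.con (a i)) : C)) :=
    fun C _ _ _ k φ a => ECAux.realize_sentOf C φ a
  -- the quantifier-free diagram of `A`
  let diag : (L[[A]]).Theory :=
    {S | ∃ (k : ℕ) (φ : L.Formula (Fin k)) (a : Fin k → A),
      BoundedFormula.IsQF φ ∧ φ.Realize a ∧ S = ECAux.sentOf φ a}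
  let base : (L[[A]]).Theory := (L.lhomWithConstants A).onTheory T ∪ diag
  have hAbase : A ⊨ base := by
    rw [Theory.model_union_iff]
    constructor
    · exact ((L.lhomWithConstants A).onTheory_model T).2 hA
    · rw [Theory.model_iff]
      rintro S ⟨k, φ, a, hqf, ha, rfl⟩
      exact (hsent A k φ a).2 ha
  -- Zorn's lemma on consistent sets of existential sentences with parameters in `A`
  let P : Set (Set ((L[[A]]).Sentence)) :=
    {s | (∀ S ∈ s, ∃ (k : ℕ) (φ : L.Formula (Fin k)) (a : Fin k → A),
        IsExistentialFormula φ ∧ S = ECAux.sentOf φ a) ∧ (base ∪ s).IsSatisfiable}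
  have hemp : ∅ ∈ P := by
    refine ⟨fun S hS => absurd hS (Set.notMem_empty S), ?_⟩
    rw [Set.union_empty]
    haveI := hAbase
    exact Theory.Model.isSatisfiable A
  have hub : ∀ c ⊆ P, IsChain (· ⊆ ·) c → ∃ ub ∈ P, ∀ s ∈ c, s ⊆ ub := by
    intro c hcP hchain
    rcases c.eq_empty_or_nonempty with rfl | hne
    · exact ⟨∅, hemp, fun s hs => absurd hs (Set.notMem_empty s)⟩
    · haveI : Nonempty c := hne.to_subtype
      refine ⟨⋃₀ c, ⟨?_, ?_⟩, fun s hs => Set.subset_sUnion_of_mem hs⟩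
      · rintro S ⟨s, hs, hSs⟩
        exact (hcP hs).1 S hSs
      · have : base ∪ ⋃₀ c = ⋃ (s : c), (base ∪ (s : Set ((L[[A]]).Sentence))) := by
          rw [Set.sUnion_eq_iUnion, Set.union_iUnion]
        rw [this]
        rw [Theory.isSatisfiable_directed_union_iff]
        · exact fun s => (hcP s.2).2
        · intro s t
          obtain ⟨u, hu, hsu, htu⟩ := hchain.directedOn s s.2 t t.2
          exact ⟨⟨u, hu⟩, Set.union_subset_union_right _ hsu,
            Set.union_subset_union_right _ htu⟩
  obtain ⟨Sm, hSm⟩ := zorn_subset P hub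
  -- take a model of the maximal consistent set
  obtain ⟨B₀⟩ := hSm.1.2
  letI : L.Structure B₀ := (L.lhomWithConstants A).reduct B₀
  haveI : (L.lhomWithConstants A).IsExpansionOn (B₀ : Type (max u v)) :=
    LHom.isExpansionOn_reduct (L.lhomWithConstants A) (B₀ : Type (max u v))
  -- the interpretation of the constants gives an `L`-embedding of `A` into `B₀`
  have hBdiag : ∀ {k : ℕ} (φ : L.Formula (Fin k)) (a : Fin k → A),
      BoundedFormula.IsQF φ → φ.Realize a →
      φ.Realize (fun i => ((L.con (a i)) : B₀)) := by
    intro k φ a hqf ha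
    have : (B₀ : Type (max u v)) ⊨ ECAux.sentOf φ a :=
      (base ∪ Sm).realize_sentence_of_mem (Set.mem_union_left _
        (Set.mem_union_right _ ⟨k, φ, a, hqf, ha, rfl⟩))
    exact (hsent B₀ k φ a).1 this
  let j : A → B₀ := fun a => ((L.con a) : B₀)
  have hj_inj : Function.Injective j := by
    intro a b hab
    by_contra hne
    have h1 : (((Term.var (0 : Fin 2) : L.Term (Fin 2)).equal (Term.var (1 : Fin 2))).not).Realize
        ![a, b] := by
      simp only [Formula.realize_not, Formula.realize_equal, Term.realize_var]
      simpa using hne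
    have h2 := hBdiag _ ![a, b] ((BoundedFormula.IsAtomic.equal _ _).isQF.not) h1
    simp only [Formula.realize_not, Formula.realize_equal, Term.realize_var] at h2
    exact h2 (by simp only [j] at hab; simpa [Formula.Realize, BoundedFormula.realize_bdEqual] using hab)
  have hj_fun : ∀ {n : ℕ} (F : L.Functions n) (x : Fin n → A),
      j (Structure.funMap F x) = Structure.funMap F (j ∘ x) := by
    intro n F x
    have h1 : ((Term.func F (fun i => Term.var (Fin.castSucc i))).equal
        (Term.var (Fin.last n))).Realize
        (Fin.snoc x (Structure.funMap F x) : Fin (n + 1) → A) := by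
      simp [Fin.snoc_castSucc, Fin.snoc_last]
    have h2 := hBdiag _ (Fin.snoc x (Structure.funMap F x))
      ((BoundedFormula.IsAtomic.equal _ _).isQF) h1
    simp at h2
    simp only [Formula.Realize, BoundedFormula.realize_bdEqual, Term.realize_var,
      Term.realize_func, Sum.elim_inl, Fin.snoc_castSucc, Fin.snoc_last] at h2
    exact h2.symm
  have hj_rel : ∀ {n : ℕ} (r : L.Relations n) (x : Fin n → A),
      (Structure.RelMap r (j ∘ x) ↔ Structure.RelMap r x) := by
    intro n r x
    constructor
    · intro h
      by_contra hn
      have h1 : ((r.formula (fun i => Term.var i)).not).Realize x := by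
        simp only [Formula.realize_not, Formula.realize_rel, Term.realize_var]
        exact hn
      have h2 := hBdiag _ x
        (((BoundedFormula.IsAtomic.rel _ _).isQF).not) h1
      simp only [Formula.realize_not, Formula.realize_rel, Term.realize_var] at h2
      exact h2 h
    · intro h
      have h1 : (r.formula (fun i => Term.var i)).Realize x := by
        simp only [Formula.realize_rel, Term.realize_var]
        exact h
      have h2 := hBdiag _ x ((BoundedFormula.IsAtomic.rel _ _).isQF) h1
      simp only [Formula.realize_rel, Term.realize_var] at h2
      exact h2
  let f : A ↪[L] B₀ := ⟨⟨j, hj_inj⟩, fun {n} F x => hj_fun F x, fun {n} r x => hj_rel r x⟩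
  have hBT : (B₀ : Type (max u v)) ⊨ T := by
    have : (B₀ : Type (max u v)) ⊨ (L.lhomWithConstants A).onTheory T :=
      B₀.is_model.mono (Set.subset_union_left.trans Set.subset_union_left)
    exact ((L.lhomWithConstants A).onTheory_model T).1 this
  refine ⟨B₀, inferInstance, inferInstance, f, hBT, ?_⟩
  intro k φ hφ a ⟨C, iC, nC, hCT, g, hg⟩
  -- make `C` a model of `L[[A]]` via `g ∘ f`
  letI : (constantsOn A).Structure C := constantsOn.structure (fun x => g (f x))
  have hCmod : C ⊨ base ∪ (Sm ∪ {ECAux.sentOf φ a}) := by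
    have h1 : C ⊨ base := by
      refine Theory.model_union_iff.2 ⟨((L.lhomWithConstants A).onTheory_model T).2 hCT, ?_⟩
      rw [Theory.model_iff]
      rintro S ⟨k', ψ, b, hqf, hb, rfl⟩
      refine (hsent C k' ψ b).2 ?_
      have : ψ.Realize ((g.comp f) ∘ b) :=
        (ECAux.realize_embedding_qf hqf (g.comp f)).2 hb
      exact this
    have h2 : C ⊨ Sm := by
      rw [Theory.model_iff]
      intro S hS
      obtain ⟨k', ψ, b, hex, rfl⟩ := hSm.1.1 S hS
      have hB : ψ.Realize (fun i => ((L.con (b i)) : B₀)) :=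
        (hsent B₀ k' ψ b).1 ((base ∪ Sm).realize_sentence_of_mem (Set.mem_union_right _ hS))
      refine (hsent C k' ψ b).2 ?_
      have := ECAux.realize_embedding_ex hex.isExistential g
        (v := fun i => ((L.con (b i)) : B₀)) hB
      exact this
    have h3 : C ⊨ ({ECAux.sentOf φ a} : (L[[A]]).Theory) := by
      rw [Theory.model_singleton_iff]
      refine (hsent C k φ a).2 ?_
      exact hg
    exact Theory.model_union_iff.2 ⟨h1, Theory.model_union_iff.2 ⟨h2, h3⟩⟩
  haveI := hCmod
  have hsat : (base ∪ (Sm ∪ {ECAux.sentOf φ a})).IsSatisfiable := Theory.Model.isSatisfiable C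
  have hmem : (Sm ∪ {ECAux.sentOf φ a}) ∈ P := by
    constructor
    · rintro S (hS | rfl)
      · exact hSm.1.1 S hS
      · exact ⟨k, φ, a, hφ, rfl⟩
    · exact hsat
  have hsub : ECAux.sentOf φ a ∈ Sm :=
    hSm.2 hmem Set.subset_union_left (Set.mem_union_right _ rfl)
  have : (B₀ : Type (max u v)) ⊨ ECAux.sentOf φ a :=
    (base ∪ Sm).realize_sentence_of_mem (Set.mem_union_right _ hsub)
  exact (hsent B₀ k φ a).1 this

/-! ### The chain construction -/

/-- A bundled nonempty model of `T`. -/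
structure ECStage (T : L.Theory) : Type (max u v + 1) where
  carrier : Type (max u v)
  [str : L.Structure carrier]
  [nonempty : Nonempty carrier]
  mod : carrier ⊨ T

attribute [instance] ECStage.str ECStage.nonempty

/-- The one-step property guaranteed by `ECAux.exists_onestep`. -/
def ECStage.StepProp (T : L.Theory) (s t : ECStage T) (f : s.carrier ↪[L] t.carrier) : Prop :=
  ∀ (k : ℕ) (φ : L.Formula (Fin k)), IsExistentialFormula φ → ∀ a : Fin k → s.carrier,
    (∃ (C : Type (max u v)) (_ : L.Structure C) (_ : Nonempty C),
      C ⊨ T ∧ ∃ g : t.carrier ↪[L] C, φ.Realize (g ∘ f ∘ a)) → φ.Realize (f ∘ a)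

/-- One step of the chain construction. -/
noncomputable def ECStage.step (T : L.Theory) (s : ECStage T) :
    Σ' (t : ECStage T) (f : s.carrier ↪[L] t.carrier), ECStage.StepProp T s t f :=
  Classical.choice (by
    obtain ⟨B, iB, nB, f, hBT, hstep⟩ := ECAux.exists_onestep T s.carrier s.mod
    exact ⟨⟨{ carrier := B, str := iB, nonempty := nB, mod := hBT }, f, hstep⟩⟩)

/-- The `ℕ`-indexed chain of models given by iterating `ECStage.step`. -/
noncomputable def ECChain (T : L.Theory) (s₀ : ECStage T) : ℕ → ECStage T :=
  fun n => Nat.rec s₀ (fun _ s => (ECStage.step T s).1) n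

/-- Every model of a universal theory embeds into an existentially closed model of the
theory. -/
theorem embeds_into_ec_model (T : L.Theory)
    (hT : ∀ φ ∈ T, IsUniversalFormula φ)
    (M : Type (max u v)) [L.Structure M] [Nonempty M] (hM : M ⊨ T) :
    ∃ (N : Type (max u v)) (_ : L.Structure N) (_ : Nonempty N),
      IsECFor T N ∧ Nonempty (M ↪[L] N) := by
  classical
  let s₀ : ECStage (L := L) T := { carrier := M, mod := hM }
  let chain : ℕ → ECStage (L := L) T := ECChain T s₀
  let G : ℕ → Type (max u v) := fun n => (chain n).carrier
  let f' : ∀ n : ℕ, G n ↪[L] G (n + 1) := fun n => (ECStage.step T (chain n)).2.1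
  let F : ∀ i j : ℕ, i ≤ j → G i ↪[L] G j := fun i j h => DirectedSystem.natLERec f' i j h
  haveI : DirectedSystem G fun i j h => F i j h := DirectedSystem.natLERec.directedSystem f'
  let N := Language.DirectLimit G F
  haveI : Nonempty N := ⟨DirectLimit.of L ℕ G F 0 (Classical.arbitrary (G 0))⟩
  have hof : ∀ (n : ℕ) (x : G n),
      DirectLimit.of L ℕ G F (n + 1) (f' n x) = DirectLimit.of L ℕ G F n x := by
    intro n x
    have h1 : F n (n + 1) (Nat.le_succ n) x = f' n x := by
      rw [DirectedSystem.coe_natLERec]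
      beta_reduce
      erw [Nat.leRecOn_succ (Nat.le_refl n), Nat.leRecOn_self]
    rw [← h1]
    exact DirectLimit.of_f
  have hNT : N ⊨ T := by
    rw [Theory.model_iff]
    intro φ hφ
    obtain ⟨n, χ, hqf, rfl⟩ := hT φ hφ
    refine BoundedFormula.realize_alls.2 ?_
    intro xs
    obtain ⟨i, y, rfl⟩ := DirectLimit.exists_quotient_mk'_sigma_mk'_eq G F xs
    haveI := (chain i).mod
    have hGi := T.realize_sentence_of_mem (M := G i) hφ
    have hGiy : χ.Realize (default : Empty → G i) y := BoundedFormula.realize_alls.1 hGi y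
    have := (hqf.realize_embedding (DirectLimit.of L ℕ G F i)
      (v := (default : Empty → G i)) (xs := y)).2 hGiy
    rw [Subsingleton.elim ((DirectLimit.of L ℕ G F i) ∘ (default : Empty → G i)) default] at this
    exact this
  have hEC : IsECFor T N := by
    refine ⟨hNT, ?_⟩
    intro N' iN' nN' hN'T g k φ hφ x hgx
    obtain ⟨i, y, rfl⟩ := DirectLimit.exists_quotient_mk'_sigma_mk'_eq G F x
    have hstep := (ECStage.step T (chain i)).2.2
    have hreal : φ.Realize ((f' i) ∘ y) := by
      refine hstep k φ hφ y
        ⟨N', iN', nN', hN'T, g.comp (DirectLimit.of L ℕ G F (i + 1)), ?_⟩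
      show φ.Realize ((g.comp (DirectLimit.of L ℕ G F (i + 1))) ∘ (f' i) ∘ y)
      have heq : (g.comp (DirectLimit.of L ℕ G F (i + 1))) ∘ (f' i) ∘ y
          = g ∘ (fun a => DirectLimit.of L ℕ G F i (y a)) := by
        funext a
        simp only [Function.comp_apply, Embedding.comp_apply, hof]
      rw [heq]
      exact hgx
    have hup := ECAux.realize_embedding_ex hφ.isExistential
      (DirectLimit.of L ℕ G F (i + 1)) (v := (f' i) ∘ y) hreal
    have heq : (DirectLimit.of L ℕ G F (i + 1)) ∘ ((f' i) ∘ y)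
        = fun a => DirectLimit.of L ℕ G F i (y a) := by
      funext a
      exact hof i (y a)
    rw [heq] at hup
    exact hup
  exact ⟨N, inferInstance, inferInstance, hEC, ⟨DirectLimit.of L ℕ G F 0⟩⟩
end
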